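/- arXiv:2505.16837 — 2 statements merged into one kernel-verified Lean document; each statement's English description precedes it below -/
import Mathlib

section
/- Every finite poset whose cover graph is a cycle has order dimension at most 3. -/
section Defs

variable {α : Type*}

/-- `r` is a linear extension of the partial order on `α`. -/
def IsLinExt [PartialOrder α] (r : α → α → Prop) : Prop :=
  IsLinearOrder α r ∧ ∀ a b : α, a ≤ b → r a b

/-- A family of linear orders is a realizer of the partial order on `α`. -/
def IsRealizer [PartialOrder α] {ι : Type*} (L : ι → α → α → Prop) : Prop :=
  (∀ i, IsLinExt (L i)) ∧ ∀ a b : α, a ≤ b ↔ ∀ i, L i a b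

/-- The order dimension: minimal size of a realizer. -/
noncomputable def orderDim (α : Type*) [PartialOrder α] : ℕ :=
  sInf {k | ∃ L : Fin k → α → α → Prop, IsRealizer L}

/-- The cover graph (undirected Hasse diagram) of a poset. -/
def coverGraph (α : Type*) [PartialOrder α] : SimpleGraph α where
  Adj a b := a ⋖ b ∨ b ⋖ a
  symm := ⟨fun a b h => h.elim Or.inr Or.inl⟩
  loopless := ⟨fun a h =>
    h.elim (fun h' => absurd h'.lt (lt_irrefl a)) (fun h' => absurd h'.lt (lt_irrefl a))⟩

/-- The linear order determined by a duplicate-free full list: `a ≤ b` iff `a`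
occurs no later than `b`. -/
def listLE [DecidableEq α] (l : List α) (a b : α) : Prop :=
  l.idxOf a ≤ l.idxOf b

/-- The lists in `ls` are words (each listing all elements of `α` exactly once)
whose associated linear orders are linear extensions of `α` forming a realizer. -/
def IsListRealizer [PartialOrder α] [DecidableEq α] (ls : List (List α)) : Prop :=
  (∀ l ∈ ls, l.Nodup ∧ ∀ a : α, a ∈ l) ∧
  (∀ l ∈ ls, ∀ a b : α, a ≤ b → listLE l a b) ∧
  (∀ a b : α, (∀ l ∈ ls, listLE l a b) → a ≤ b)

/-- A graph is a cycle: connected and 2-regular. -/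
def IsCycleGraph {V : Type*} (G : SimpleGraph V) : Prop :=
  G.Connected ∧ ∀ v : V, (G.neighborSet v).ncard = 2

/-- `Ua a`: elements `x ≠ a` such that the path from `a` to `x` in the cover
graph starts with an upward cover. -/
def Ua [PartialOrder α] (a : α) : Set α :=
  {x | x ≠ a ∧ ∃ p : (coverGraph α).Walk a x, p.IsPath ∧ a ⋖ p.getVert 1}

/-- `Da a`: elements `x ≠ a` such that the path from `a` to `x` in the cover
graph starts with a downward cover. -/
def Da [PartialOrder α] (a : α) : Set α :=
  {x | x ≠ a ∧ ∃ p : (coverGraph α).Walk a x, p.IsPath ∧ p.getVert 1 ⋖ a}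

/-- The grafting order on the disjoint union of rooted posets `(T x, r x)` indexed
by a poset `β`. -/
def graftLE {β : Type*} [PartialOrder β] {T : β → Type*} [∀ x, PartialOrder (T x)]
    (r : ∀ x, T x) (p q : Σ x, T x) : Prop :=
  (∃ h : p.1 = q.1, (h ▸ p.2 : T q.1) ≤ q.2) ∨ (p.1 < q.1 ∧ p.2 ≤ r p.1 ∧ r q.1 ≤ q.2)

end Defs
section CycleProof

open Relation

private lemma enc_lt' {B u1 u2 v1 v2 : ℕ} (h : u1 < u2) (hv : v1 < B) :
    u1 * B + v1 < u2 * B + v2 := by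
  calc u1 * B + v1 < u1 * B + B := Nat.add_lt_add_left hv _
    _ = (u1 + 1) * B := by ring
    _ ≤ u2 * B := mul_le_mul_left h B
    _ ≤ u2 * B + v2 := Nat.le_add_right _ _

private lemma enc_le' {B u1 u2 v1 v2 : ℕ} (h : u1 * B + v1 ≤ u2 * B + v2) (hv : v2 < B) :
    u1 ≤ u2 := by
  by_contra hc
  exact absurd h (Nat.not_le.mpr (enc_lt' (Nat.not_le.mp hc) hv))

private lemma enc_inj' {B u1 u2 v1 v2 : ℕ} (hv1 : v1 < B) (hv2 : v2 < B)
    (h : u1 * B + v1 = u2 * B + v2) : u1 = u2 ∧ v1 = v2 := by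
  have hu : u1 = u2 := le_antisymm (enc_le' h.le hv2) (enc_le' h.ge hv1)
  subst hu
  exact ⟨rfl, Nat.add_left_cancel h⟩

private theorem cycle_key {α : Type*} [PartialOrder α] [Fintype α] (n : ℕ) (hn : 3 ≤ n)
    (p : ℕ → α) (m : α) (hm0 : p 0 = m)
    (hm : ∀ x, m ≤ x → x = m)
    (hinj : ∀ i j, i < n → j < n → p i = p j → i = j)
    (hsurj : ∀ x, ∃ i, i < n ∧ p i = x)
    (hadj : ∀ x y, (coverGraph α).Adj x y → x ≠ m → y ≠ m →
      ∃ i j, i < n ∧ j < n ∧ p i = x ∧ p j = y ∧ (j = i + 1 ∨ i = j + 1)) :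
    ∃ L : Fin 3 → α → α → Prop, IsRealizer L := by
  classical
  haveI : LocallyFiniteOrder α := Fintype.toLocallyFiniteOrder
  choose ι hι1 hι2 using hsurj
  have idx_p : ∀ j, j < n → ι (p j) = j := fun j hj => hinj _ _ (hι1 _) hj (hι2 _)
  have pm_eq : ∀ j, j < n → p j = m → j = 0 := by
    intro j hj h
    exact hinj j 0 hj (by omega) (by rw [h, hm0])
  have idx_pos : ∀ x, x ≠ m → 1 ≤ ι x := by
    intro x hx
    rcases Nat.eq_zero_or_pos (ι x) with h | h
    · exfalso; apply hx; rw [← hι2 x, h, hm0]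
    · exact h
  have hιb : ∀ x, x ≠ m → 1 ≤ ι x ∧ ι x < n := fun x hx => ⟨idx_pos x hx, hι1 x⟩
  -- adjacency step for covers
  have step : ∀ x y : α, x ⋖ y → y ≠ m → (ι y = ι x + 1 ∨ ι x = ι y + 1) := by
    intro x y hxy hy
    have hx : x ≠ m := by
      intro h
      exact hy (hm y (h ▸ hxy.le))
    obtain ⟨i, j, hi, hj, hpi, hpj, hij⟩ := hadj x y (Or.inl hxy) hx hy
    have h1 : ι x = i := by rw [← hpi]; exact idx_p i hi
    have h2 : ι y = j := by rw [← hpj]; exact idx_p j hj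
    omega
  -- interval lemma along cover chains
  have A : ∀ x y : α, Relation.TransGen (· ⋖ ·) x y → y ≠ m →
      ∀ k, min (ι x) (ι y) ≤ k → k ≤ max (ι x) (ι y) → x ≤ p k := by
    intro x y htg
    induction htg with
    | @single b hr =>
      intro hb k h1 h2
      have hs := step _ _ hr hb
      have : k = ι x ∨ k = ι b := by omega
      rcases this with rfl | rfl
      · exact le_of_eq (hι2 x).symm
      · rw [hι2 b]; exact hr.le
    | @tail b c hab hbc ih =>
      intro hc k h1 h2
      have hb : b ≠ m := by
        intro h
        have := hm c (h ▸ hbc.le)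
        exact hc this
      have hs := step _ _ hbc hc
      have hxb : x < b := lt_iff_transGen_covBy.mpr hab
      by_cases hk : k = ι c
      · rw [hk, hι2 c]; exact (hxb.trans hbc.lt).le
      · exact ih hb k (by omega) (by omega)
  have Ale : ∀ x y : α, x ≤ y → y ≠ m →
      ∀ k, min (ι x) (ι y) ≤ k → k ≤ max (ι x) (ι y) → x ≤ p k := by
    intro x y hxy hy k h1 h2
    rcases eq_or_lt_of_le hxy with rfl | hlt
    · have hk : k = ι x := by omega
      rw [hk]; exact le_of_eq (hι2 x).symm
    · exact A x y (lt_iff_transGen_covBy.mp hlt) hy k h1 h2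
  -- upper sets along indices
  set T : α → Set ℕ := fun x => {i | 1 ≤ i ∧ i < n ∧ x ≤ p i} with hT
  have hTne : ∀ x : α, x ≠ m → ι x ∈ T x := by
    intro x hx
    exact ⟨idx_pos x hx, hι1 x, le_of_eq (hι2 x).symm⟩
  have hTbdd : ∀ x : α, BddAbove (T x) := fun x => ⟨n, fun i hi => hi.2.1.le⟩
  set f : α → ℕ := fun x => sInf (T x) with hf
  set g : α → ℕ := fun x => sSup (T x) with hg
  have hfT : ∀ x, x ≠ m → f x ∈ T x := fun x hx => Nat.sInf_mem ⟨_, hTne x hx⟩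
  have hgT : ∀ x, x ≠ m → g x ∈ T x := fun x hx => Nat.sSup_mem ⟨_, hTne x hx⟩ (hTbdd x)
  have hfle : ∀ x, x ≠ m → f x ≤ ι x := fun x hx => Nat.sInf_le (hTne x hx)
  have hgle : ∀ x, x ≠ m → ι x ≤ g x := fun x hx => le_csSup (hTbdd x) (hTne x hx)
  have hfb : ∀ x, x ≠ m → 1 ≤ f x ∧ f x < n := fun x hx => ⟨(hfT x hx).1, (hfT x hx).2.1⟩
  have hgb : ∀ x, x ≠ m → 1 ≤ g x ∧ g x < n := fun x hx => ⟨(hgT x hx).1, (hgT x hx).2.1⟩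
  -- interval lemma
  have INT : ∀ x k, x ≠ m → f x ≤ k → k ≤ g x → x ≤ p k := by
    intro x k hx h1 h2
    rcases le_or_gt k (ι x) with hk | hk
    · have h3 := hfT x hx
      have h4 := h3.1
      have hy : p (f x) ≠ m := by
        intro h
        have := pm_eq _ h3.2.1 h
        omega
      have hidx : ι (p (f x)) = f x := idx_p _ h3.2.1
      exact Ale x (p (f x)) h3.2.2 hy k (by rw [hidx]; omega) (by rw [hidx]; omega)
    · have h3 := hgT x hx
      have h4 := h3.1
      have hy : p (g x) ≠ m := by
        intro h
        have := pm_eq _ h3.2.1 h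
        omega
      have hidx : ι (p (g x)) = g x := idx_p _ h3.2.1
      exact Ale x (p (g x)) h3.2.2 hy k (by rw [hidx]; omega) (by rw [hidx]; omega)
  -- tie lemmas
  have TIEF : ∀ x y, x ≠ m → y ≠ m → f x = f y → ι x ≤ ι y → y ≤ x := by
    intro x y hx hy hfxy hxy
    have := INT y (ι x) hy (by rw [← hfxy]; exact hfle x hx) (le_trans hxy (hgle y hy))
    rwa [hι2] at this
  have TIEG : ∀ x y, x ≠ m → y ≠ m → g x = g y → ι x ≤ ι y → x ≤ y := by
    intro x y hx hy hgxy hxy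
    have := INT x (ι y) hx (le_trans (hfle x hx) hxy) (by rw [hgxy]; exact hgle y hy)
    rwa [hι2] at this
  -- monotonicity
  have hTsub : ∀ x y : α, x ≤ y → T y ⊆ T x := fun x y hxy i hi =>
    ⟨hi.1, hi.2.1, hxy.trans hi.2.2⟩
  have FMONO : ∀ x y : α, x ≤ y → y ≠ m → f x ≤ f y := fun x y hxy hy =>
    Nat.sInf_le (hTsub x y hxy (hfT y hy))
  have GMONO : ∀ x y : α, x ≤ y → y ≠ m → g y ≤ g x := fun x y hxy hy =>
    le_csSup (hTbdd x) (hTsub x y hxy (hgT y hy))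
  -- the three embeddings
  set B := n + 2 with hB
  set Φ1 : α → ℕ := fun x => if x = m then (n+1) * B else f x * B + (n - ι x) with hΦ1
  set Φ2 : α → ℕ := fun x => if x = m then (n+1) * B else (n - g x) * B + ι x with hΦ2
  set rk : α → ℕ := fun x => if x = m then 1 else if x ≤ m then 0 else 2 with hrk
  set Φ3 : α → ℕ := fun x => rk x * (B * B) + Φ1 x with hΦ3
  have hΦ1lt : ∀ x, x ≠ m → Φ1 x < (n+1) * B := by
    intro x hx
    rw [hΦ1]; simp only [if_neg hx]
    have h1 := hfb x hx
    have h2 := hιb x hx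
    calc f x * B + (n - ι x) < f x * B + B := Nat.add_lt_add_left (by omega) _
      _ = (f x + 1) * B := by ring
      _ ≤ (n + 1) * B := mul_le_mul_left (by omega) B
  have hΦ2lt : ∀ x, x ≠ m → Φ2 x < (n+1) * B := by
    intro x hx
    rw [hΦ2]; simp only [if_neg hx]
    have h1 := hgb x hx
    have h2 := hιb x hx
    calc (n - g x) * B + ι x < (n - g x) * B + B := Nat.add_lt_add_left (by omega) _
      _ = ((n - g x) + 1) * B := by ring
      _ ≤ (n + 1) * B := mul_le_mul_left (by omega) B
  have hKB : (n+1) * B < B * B := by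
    have : 0 < B := by omega
    exact Nat.mul_lt_mul_of_lt_of_le (by omega) (le_refl B) this
  have hΦ1K : ∀ x, Φ1 x < B * B := by
    intro x
    by_cases hx : x = m
    · rw [hΦ1]; simp only [if_pos hx]; exact hKB
    · exact (hΦ1lt x hx).trans hKB
  -- strict monotonicity
  have SM1 : ∀ a b : α, a < b → Φ1 a < Φ1 b := by
    intro a b hab
    have ham : a ≠ m := by
      intro h
      have := hm b (h ▸ hab.le)
      exact hab.ne (h.trans this.symm)
    by_cases hbm : b = m
    · have := hΦ1lt a ham
      rw [hΦ1]; simp only [if_neg ham, if_pos hbm]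
      rw [hΦ1] at this; simp only [if_neg ham] at this
      exact this
    · have hfab := FMONO a b hab.le hbm
      rw [hΦ1]; simp only [if_neg ham, if_neg hbm]
      rcases lt_or_eq_of_le hfab with h | h
      · exact enc_lt' h (by have := hιb a ham; omega)
      · have hιba : ι b < ι a := by
          by_contra hcon
          push_neg at hcon
          exact absurd (TIEF a b ham hbm h hcon) hab.not_ge
        rw [h]
        exact Nat.add_lt_add_left (by have := hιb a ham; have := hιb b hbm; omega) _
  have SM2 : ∀ a b : α, a < b → Φ2 a < Φ2 b := by
    intro a b hab
    have ham : a ≠ m := by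
      intro h
      have := hm b (h ▸ hab.le)
      exact hab.ne (h.trans this.symm)
    by_cases hbm : b = m
    · have := hΦ2lt a ham
      rw [hΦ2]; simp only [if_neg ham, if_pos hbm]
      rw [hΦ2] at this; simp only [if_neg ham] at this
      exact this
    · have hgba := GMONO a b hab.le hbm
      rw [hΦ2]; simp only [if_neg ham, if_neg hbm]
      rcases lt_or_eq_of_le hgba with h | h
      · have hu : n - g a < n - g b := by
          have := hgb a ham; have := hgb b hbm; omega
        exact enc_lt' hu (by have := hιb a ham; omega)
      · have hιab : ι a < ι b := by
          by_contra hcon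
          push_neg at hcon
          exact absurd (TIEG b a hbm ham h hcon) hab.not_ge
        rw [h]
        exact Nat.add_lt_add_left hιab _
  have SM3 : ∀ a b : α, a < b → Φ3 a < Φ3 b := by
    intro a b hab
    have ham : a ≠ m := by
      intro h
      have := hm b (h ▸ hab.le)
      exact hab.ne (h.trans this.symm)
    rw [hΦ3]; simp only
    by_cases hbm : b = m
    · have hal : a ≤ m := hbm ▸ hab.le
      have ha0 : rk a = 0 := by rw [hrk]; simp only [if_neg ham, if_pos hal]
      have hb1 : rk b = 1 := by rw [hrk]; simp only [if_pos hbm]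
      rw [ha0, hb1, zero_mul, one_mul, zero_add]
      exact (hΦ1K a).trans_le (Nat.le_add_right _ _)
    · by_cases hbl : b ≤ m
      · have hal : a ≤ m := hab.le.trans hbl
        have ha0 : rk a = 0 := by rw [hrk]; simp only [if_neg ham, if_pos hal]
        have hb0 : rk b = 0 := by rw [hrk]; simp only [if_neg hbm, if_pos hbl]
        rw [ha0, hb0]
        exact Nat.add_lt_add_left (SM1 a b hab) _
      · have hb2 : rk b = 2 := by rw [hrk]; simp only [if_neg hbm, if_neg hbl]
        by_cases hal : a ≤ m
        · have ha0 : rk a = 0 := by rw [hrk]; simp only [if_neg ham, if_pos hal]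
          rw [ha0, hb2, zero_mul, zero_add]
          calc Φ1 a < B * B := hΦ1K a
            _ ≤ 2 * (B * B) := by omega
            _ ≤ 2 * (B * B) + Φ1 b := Nat.le_add_right _ _
        · have ha2 : rk a = 2 := by rw [hrk]; simp only [if_neg ham, if_neg hal]
          rw [ha2, hb2]
          exact Nat.add_lt_add_left (SM1 a b hab) _
  -- injectivity
  have INJ1 : ∀ a b : α, Φ1 a = Φ1 b → a = b := by
    intro a b h
    by_cases ham : a = m <;> by_cases hbm : b = m
    · rw [ham, hbm]
    · exfalso
      rw [hΦ1] at h; simp only [if_pos ham, if_neg hbm] at h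
      have := hΦ1lt b hbm
      rw [hΦ1] at this; simp only [if_neg hbm] at this
      omega
    · exfalso
      rw [hΦ1] at h; simp only [if_neg ham, if_pos hbm] at h
      have := hΦ1lt a ham
      rw [hΦ1] at this; simp only [if_neg ham] at this
      omega
    · rw [hΦ1] at h; simp only [if_neg ham, if_neg hbm] at h
      have hva : n - ι a < B := by have := hιb a ham; omega
      have hvb : n - ι b < B := by have := hιb b hbm; omega
      obtain ⟨h1, h2⟩ := enc_inj' hva hvb h
      have : ι a = ι b := by have := hιb a ham; have := hιb b hbm; omega
      rw [← hι2 a, ← hι2 b, this]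
  have INJ2 : ∀ a b : α, Φ2 a = Φ2 b → a = b := by
    intro a b h
    by_cases ham : a = m <;> by_cases hbm : b = m
    · rw [ham, hbm]
    · exfalso
      rw [hΦ2] at h; simp only [if_pos ham, if_neg hbm] at h
      have := hΦ2lt b hbm
      rw [hΦ2] at this; simp only [if_neg hbm] at this
      omega
    · exfalso
      rw [hΦ2] at h; simp only [if_neg ham, if_pos hbm] at h
      have := hΦ2lt a ham
      rw [hΦ2] at this; simp only [if_neg ham] at this
      omega
    · rw [hΦ2] at h; simp only [if_neg ham, if_neg hbm] at h
      have hva : ι a < B := by have := hιb a ham; omega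
      have hvb : ι b < B := by have := hιb b hbm; omega
      obtain ⟨h1, h2⟩ := enc_inj' hva hvb h
      rw [← hι2 a, ← hι2 b, h2]
  have INJ3 : ∀ a b : α, Φ3 a = Φ3 b → a = b := by
    intro a b h
    rw [hΦ3] at h; simp only at h
    obtain ⟨h1, h2⟩ := enc_inj' (hΦ1K a) (hΦ1K b) h
    exact INJ1 a b h2
  -- package
  set Φ : Fin 3 → α → ℕ := fun i => if i = 0 then Φ1 else if i = 1 then Φ2 else Φ3 with hΦ
  have SM : ∀ (i : Fin 3) (a b : α), a < b → Φ i a < Φ i b := by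
    intro i a b h
    fin_cases i
    · simpa [hΦ] using SM1 a b h
    · simpa [hΦ] using SM2 a b h
    · simpa [hΦ] using SM3 a b h
  have INJ : ∀ (i : Fin 3) (a b : α), Φ i a = Φ i b → a = b := by
    intro i a b h
    fin_cases i
    · exact INJ1 a b (by simpa [hΦ] using h)
    · exact INJ2 a b (by simpa [hΦ] using h)
    · exact INJ3 a b (by simpa [hΦ] using h)
  have EXT : ∀ (i : Fin 3) (a b : α), a ≤ b → Φ i a ≤ Φ i b := by
    intro i a b h
    rcases eq_or_lt_of_le h with rfl | h
    · exact le_refl _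
    · exact (SM i a b h).le
  have BWD : ∀ a b : α, (∀ i : Fin 3, Φ i a ≤ Φ i b) → a ≤ b := by
    intro a b hall
    have h1 : Φ1 a ≤ Φ1 b := by simpa [hΦ] using hall 0
    have h2 : Φ2 a ≤ Φ2 b := by simpa [hΦ] using hall 1
    have h3 : Φ3 a ≤ Φ3 b := by simpa [hΦ] using hall 2
    by_cases hab : a = b
    · exact hab.le
    by_cases ham : a = m
    · exfalso
      have hbm : b ≠ m := fun h => hab (ham.trans h.symm)
      rw [hΦ1] at h1; simp only [if_pos ham, if_neg hbm] at h1
      have := hΦ1lt b hbm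
      rw [hΦ1] at this; simp only [if_neg hbm] at this
      omega
    by_cases hbm : b = m
    · by_contra halm
      have halm' : ¬ a ≤ m := by rw [← hbm]; exact halm
      have ha2 : rk a = 2 := by rw [hrk]; simp only [if_neg ham, if_neg halm']
      have hb1 : rk b = 1 := by rw [hrk]; simp only [if_pos hbm]
      have hΦ1b : Φ1 b = (n+1) * B := by rw [hΦ1]; simp only [if_pos hbm]
      rw [hΦ3] at h3; simp only at h3
      rw [ha2, hb1, hΦ1b] at h3
      have hK := hKB
      linarith only [h3, hK]
    · -- both nonmaximal
      rw [hΦ1] at h1; simp only [if_neg ham, if_neg hbm] at h1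
      rw [hΦ2] at h2; simp only [if_neg ham, if_neg hbm] at h2
      have hva : n - ι a < B := by have := hιb a ham; omega
      have hvb : n - ι b < B := by have := hιb b hbm; omega
      have hfab : f a ≤ f b := enc_le' h1 hvb
      rcases lt_or_eq_of_le hfab with hflt | hfeq
      · have hgba : n - g a ≤ n - g b := enc_le' h2 (by have := hιb b hbm; omega)
        have hgle' : g b ≤ g a := by have := hgb a ham; have := hgb b hbm; omega
        rcases lt_or_eq_of_le hgle' with hglt | hgeq
        · have := INT a (ι b) ham (hflt.le.trans (hfle b hbm)) ((hgle b hbm).trans hglt.le)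
          rwa [hι2] at this
        · have hgg : n - g a = n - g b := by rw [hgeq]
          rw [hgg] at h2
          have hι := le_of_add_le_add_left h2
          exact TIEG a b ham hbm hgeq.symm hι
      · rw [hfeq] at h1
        have hv := le_of_add_le_add_left h1
        have hba : ι b ≤ ι a := by have := hιb a ham; have := hιb b hbm; omega
        exact TIEF b a hbm ham hfeq.symm hba
  refine ⟨fun i a b => Φ i a ≤ Φ i b, fun i => ⟨?_, fun a b h => EXT i a b h⟩,
    fun a b => ⟨fun h i => EXT i a b h, BWD a b⟩⟩
  exact { refl := fun a => le_refl _
          trans := fun a b c h1 h2 => le_trans h1 h2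
          antisymm := fun a b h1 h2 => INJ i a b (le_antisymm h1 h2)
          total := fun a b => Nat.le_total _ _ }

end CycleProof

/-- a finite poset whose cover graph is a cycle has order
dimension at most `3`. -/
theorem cycle_poset_dim_le_three {α : Type*} [PartialOrder α] [Fintype α]
    (hc : IsCycleGraph (coverGraph α)) : orderDim α ≤ 3 := by
  classical
  obtain ⟨hconn, hreg⟩ := hc
  haveI : Nonempty α := hconn.nonempty
  -- a maximal element
  obtain ⟨m, -, hmax⟩ := Finset.exists_maximal (s := (Finset.univ : Finset α))
    ⟨Classical.arbitrary α, Finset.mem_univ _⟩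
  have hm : ∀ x, m ≤ x → x = m := by
    intro x hx
    by_contra h
    exact h (le_antisymm (hmax (Finset.mem_univ x) hx) hx)
  -- "other neighbor" choice
  have next_ex : ∀ u v : α, ∃ w, (coverGraph α).Adj v w ∧ w ≠ u := by
    intro u v
    obtain ⟨a, b, hab, hset⟩ := Set.ncard_eq_two.mp (hreg v)
    by_cases ha : a = u
    · refine ⟨b, ?_, ?_⟩
      · have hb : b ∈ (coverGraph α).neighborSet v := by
          rw [hset]; exact Set.mem_insert_iff.mpr (Or.inr rfl)
        exact hb
      · rw [← ha]; exact Ne.symm hab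
    · refine ⟨a, ?_, ha⟩
      have hb : a ∈ (coverGraph α).neighborSet v := by
        rw [hset]; exact Set.mem_insert _ _
      exact hb
  choose nxt hnxtadj hnxtne using next_ex
  obtain ⟨w1, hw1⟩ : ∃ w, (coverGraph α).Adj m w := by
    obtain ⟨w, hw⟩ := Set.nonempty_of_ncard_ne_zero
      (show ((coverGraph α).neighborSet m).ncard ≠ 0 by rw [hreg m]; omega)
    exact ⟨w, hw⟩
  -- the walk around the cycle
  let F : ℕ → α × α := fun k => Nat.rec (m, w1) (fun _ q => (q.2, nxt q.1 q.2)) k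
  let p : ℕ → α := fun k => (F k).1
  have hp0 : p 0 = m := rfl
  have hpadj : ∀ k, (coverGraph α).Adj (p k) (p (k+1)) := by
    intro k
    cases k with
    | zero => exact hw1
    | succ k => exact hnxtadj (F k).1 (F k).2
  have hpne2 : ∀ k, p (k+2) ≠ p k := fun k => hnxtne (F k).1 (F k).2
  -- neighbor set identification
  have pairset : ∀ v a b : α, a ≠ b → (coverGraph α).Adj v a → (coverGraph α).Adj v b →
      (coverGraph α).neighborSet v = {a, b} := by
    intro v a b hne h1 h2
    have hsub : ({a, b} : Set α) ⊆ (coverGraph α).neighborSet v := by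
      intro x hx
      simp only [Set.mem_insert_iff, Set.mem_singleton_iff] at hx
      rcases hx with rfl | rfl
      · exact h1
      · exact h2
    exact (Set.eq_of_subset_of_ncard_le hsub
      (by rw [hreg v, Set.ncard_pair hne]) (Set.toFinite _)).symm
  have hnbk : ∀ k, (coverGraph α).neighborSet (p (k+1)) = {p k, p (k+2)} :=
    fun k => pairset _ _ _ (Ne.symm (hpne2 k)) (hpadj k).symm (hpadj (k+1))
  -- first repetition
  have hex : ∃ j, 0 < j ∧ ∃ i, i < j ∧ p i = p j := by
    obtain ⟨x, y, hxy, hpxy⟩ := Fintype.exists_ne_map_eq_of_card_lt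
      (fun i : Fin (Fintype.card α + 1) => p i) (by simp)
    rcases Nat.lt_trichotomy (x : ℕ) (y : ℕ) with h | h | h
    · exact ⟨y, by omega, x, h, hpxy⟩
    · exact absurd (Fin.ext h) hxy
    · exact ⟨x, by omega, y, h, hpxy.symm⟩
  obtain ⟨N, ⟨hNpos, i0, hi0N, hpi0⟩, hNmin⟩ :
      ∃ N, (0 < N ∧ ∃ i, i < N ∧ p i = p N) ∧
        ∀ j, j < N → ¬(0 < j ∧ ∃ i, i < j ∧ p i = p j) :=
    ⟨Nat.find hex, Nat.find_spec hex, fun j hj => Nat.find_min hex hj⟩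
  have hinj : ∀ i j, i < N → j < N → p i = p j → i = j := by
    intro i j hi hj hp
    by_contra hne
    rcases Nat.lt_trichotomy i j with h | h | h
    · exact hNmin j hj ⟨by omega, i, h, hp⟩
    · exact hne h
    · exact hNmin i hi ⟨by omega, j, h, hp.symm⟩
  have hN2 : 2 ≤ N := by
    by_contra h
    have hN1 : N = 1 := by omega
    have hi0z : i0 = 0 := by omega
    rw [hi0z, hN1] at hpi0
    exact (hpadj 0).ne hpi0
  -- the first repetition closes the cycle at 0
  have hi00 : i0 = 0 := by
    by_contra h0
    obtain ⟨i1, rfl⟩ : ∃ i1, i0 = i1 + 1 := ⟨i0 - 1, by omega⟩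
    obtain ⟨N1, hN1⟩ : ∃ N1, N = N1 + 2 := ⟨N - 2, by omega⟩
    have hi0top : i1 + 1 ≠ N1 + 1 := by
      intro hEq
      rw [hN1, hEq] at hpi0
      exact (hpadj (N1+1)).ne hpi0
    have hsets : ({p i1, p (i1+2)} : Set α) = {p (N1+1), p (N1+3)} := by
      rw [← hnbk i1, ← hnbk (N1+1), show p (i1+1) = p (N1+2) from hN1 ▸ hpi0]
    have hmem : p (N1+1) ∈ ({p i1, p (i1+2)} : Set α) := by
      rw [hsets]; exact Set.mem_insert _ _
    simp only [Set.mem_insert_iff, Set.mem_singleton_iff] at hmem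
    rcases hmem with h | h
    · have := hinj (N1+1) i1 (by omega) (by omega) h
      omega
    · by_cases h2 : i1 + 2 < N
      · have h3 := hinj (N1+1) (i1+2) (by omega) h2 h
        have hii : i1 + 1 = N1 := by omega
        rw [hN1, ← hii] at hpi0
        exact hpne2 (i1+1) hpi0.symm
      · omega
  rw [hi00] at hpi0
  have hN3 : 3 ≤ N := by
    by_contra h
    have hN2' : N = 2 := by omega
    rw [hN2'] at hpi0
    exact hpne2 0 hpi0.symm
  obtain ⟨N1, hN1⟩ : ∃ N1, N = N1 + 2 := ⟨N - 2, by omega⟩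
  have hadjN : (coverGraph α).Adj (p 0) (p (N1+1)) := by
    have h := (hpadj (N1+1)).symm
    rw [← hN1, ← hpi0] at h
    exact h
  have hnb0 : (coverGraph α).neighborSet (p 0) = {p 1, p (N1+1)} := by
    refine pairset _ _ _ ?_ (hpadj 0) hadjN
    intro hEq
    have := hinj 1 (N1+1) (by omega) (by omega) hEq
    omega
  -- closure under adjacency, hence surjectivity by connectedness
  have hclosed : ∀ x y : α, (coverGraph α).Adj x y →
      (∃ i, i < N ∧ p i = x) → ∃ i, i < N ∧ p i = y := by
    rintro x y hxy ⟨i, hiN, rfl⟩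
    cases i with
    | zero =>
      have hymem : y ∈ ({p 1, p (N1+1)} : Set α) := by rw [← hnb0]; exact hxy
      simp only [Set.mem_insert_iff, Set.mem_singleton_iff] at hymem
      rcases hymem with h | h
      · exact ⟨1, by omega, h.symm⟩
      · exact ⟨N1+1, by omega, h.symm⟩
    | succ k =>
      have hymem : y ∈ ({p k, p (k+2)} : Set α) := by rw [← hnbk k]; exact hxy
      simp only [Set.mem_insert_iff, Set.mem_singleton_iff] at hymem
      rcases hymem with h | h
      · exact ⟨k, by omega, h.symm⟩
      · by_cases h2 : k + 2 < N
        · exact ⟨k+2, h2, h.symm⟩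
        · have hkN : k + 2 = N := by omega
          exact ⟨0, by omega, by rw [hpi0, ← hkN, ← h]⟩
  have hsurj : ∀ x, ∃ i, i < N ∧ p i = x := by
    intro x
    obtain ⟨w⟩ := hconn.preconnected m x
    have aux : ∀ (u v : α), (coverGraph α).Walk u v →
        (∃ i, i < N ∧ p i = u) → ∃ i, i < N ∧ p i = v := by
      intro u v w
      induction w with
      | nil => exact id
      | cons h q ih => intro hu; exact ih (hclosed _ _ h hu)
    exact aux m x w ⟨0, by omega, hp0⟩
  -- adjacency gives consecutive indices away from m
  have hadjmain : ∀ x y, (coverGraph α).Adj x y → x ≠ m → y ≠ m →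
      ∃ i j, i < N ∧ j < N ∧ p i = x ∧ p j = y ∧ (j = i + 1 ∨ i = j + 1) := by
    intro x y hxy hxm hym
    obtain ⟨i, hiN, rfl⟩ := hsurj x
    cases i with
    | zero => exact absurd hp0 hxm
    | succ k =>
      have hymem : y ∈ ({p k, p (k+2)} : Set α) := by rw [← hnbk k]; exact hxy
      simp only [Set.mem_insert_iff, Set.mem_singleton_iff] at hymem
      rcases hymem with h | h
      · exact ⟨k+1, k, hiN, by omega, rfl, h.symm, Or.inr rfl⟩
      · have hk2 : k + 2 < N := by
          rcases Nat.lt_or_ge (k+2) N with h2 | h2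
          · exact h2
          · exfalso
            have hkN : k + 2 = N := by omega
            rw [← hkN] at hpi0
            exact hym ((h.trans hpi0.symm).trans hp0)
        exact ⟨k+1, k+2, hiN, hk2, rfl, h.symm, Or.inl rfl⟩
  obtain ⟨L, hL⟩ := cycle_key N hN3 p m hp0 hm hinj hsurj hadjmain
  exact Nat.sInf_le ⟨L, hL⟩
end

section
/- Let P be the poset obtained by grafting rooted tree posets T_x, T_z (with roots r_x, r_z) onto the minimum x and maximum z of the square poset {x, a, b, z} (x < a < z, x < b < z, a incomparable to b), i.e., identifying r_x with x and r_z with z. Then P has order dimension at most 3. -/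
section SigRank

variable {β : Type*} [DecidableEq β] {T : β → Type*}

/-- Rank function on a sigma type assembled from component data. -/
noncomputable def sigRank (x a b z : β) (φ : T x → ℕ) (na nb : ℕ) (ψ : T z → ℕ)
    (p : Σ w, T w) : ℕ :=
  if h : p.1 = x then φ (h ▸ p.2)
  else if p.1 = a then na
  else if p.1 = b then nb
  else if h : p.1 = z then ψ (h ▸ p.2) else 0

lemma sigRank_x (x a b z : β) (φ : T x → ℕ) (na nb : ℕ) (ψ : T z → ℕ) (s : T x) :
    sigRank x a b z φ na nb ψ ⟨x, s⟩ = φ s := by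
  rw [sigRank, dif_pos rfl]

lemma sigRank_a (x a b z : β) (φ : T x → ℕ) (na nb : ℕ) (ψ : T z → ℕ) (hax : a ≠ x) (t : T a) :
    sigRank x a b z φ na nb ψ ⟨a, t⟩ = na := by
  rw [sigRank, dif_neg hax, if_pos rfl]

lemma sigRank_b (x a b z : β) (φ : T x → ℕ) (na nb : ℕ) (ψ : T z → ℕ) (hbx : b ≠ x)
    (hba : b ≠ a) (t : T b) :
    sigRank x a b z φ na nb ψ ⟨b, t⟩ = nb := by
  rw [sigRank, dif_neg hbx, if_neg hba, if_pos rfl]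

lemma sigRank_z (x a b z : β) (φ : T x → ℕ) (na nb : ℕ) (ψ : T z → ℕ) (hzx : z ≠ x)
    (hza : z ≠ a) (hzb : z ≠ b) (t : T z) :
    sigRank x a b z φ na nb ψ ⟨z, t⟩ = ψ t := by
  rw [sigRank, dif_neg hzx, if_neg hza, if_neg hzb, dif_pos rfl]

end SigRank

universe u

section Aux
variable {T : Type*} [PartialOrder T]

lemma rtg_cov_le {u v : T} (h : Relation.ReflTransGen (· ⋖ ·) u v) : u ≤ v := by
  induction h with
  | refl => exact le_refl _
  | tail _ hbc ih => exact ih.trans hbc.le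

lemma le_rtg_cov [Finite T] : ∀ u v : T, u ≤ v → Relation.ReflTransGen (· ⋖ ·) u v := by
  classical
  have wf := (Finite.to_wellFoundedGT (α := T)).wf
  intro u
  refine wf.induction (C := fun u => ∀ v : T, u ≤ v → Relation.ReflTransGen (· ⋖ ·) u v) u ?_
  intro u IH v huv
  rcases eq_or_lt_of_le huv with rfl | hlt
  · exact .refl
  · haveI : Fintype T := Fintype.ofFinite T
    obtain ⟨m, hm, hmin⟩ : ∃ m ∈ (Finset.univ.filter fun w => u < w ∧ w ≤ v),
        ∀ w ∈ (Finset.univ.filter fun w => u < w ∧ w ≤ v), ¬ w < m := by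
      obtain ⟨m, hm⟩ := Finset.exists_minimal
        (s := Finset.univ.filter fun w => u < w ∧ w ≤ v) ⟨v, by simp [hlt]⟩
      exact ⟨m, hm.prop, fun w hw hwm => hm.not_lt hw hwm⟩
    simp only [Finset.mem_filter, Finset.mem_univ, true_and] at hm hmin
    have hcov : u ⋖ m := ⟨hm.1, fun w hw1 hw2 => hmin w ⟨hw1, hw2.le.trans hm.2⟩ hw2⟩
    exact (IH m hm.1 v hm.2).head hcov

/-- The step relation of the cover graph with the edge `{r,c}` deleted. -/
def CStep (r c u v : T) : Prop := (coverGraph T).Adj u v ∧ ¬ (s(u, v) = s(r, c))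

/-- Reachability avoiding the edge `{r,c}`. -/
def CRel (r c u v : T) : Prop := Relation.ReflTransGen (CStep r c) u v

lemma CStep.symm {r c u v : T} (h : CStep r c u v) : CStep r c v u :=
  ⟨h.1.symm, fun hh => h.2 ((Sym2.eq_swap ..).trans hh)⟩

lemma CRel.symm {r c u v : T} (h : CRel r c u v) : CRel r c v u := by
  induction h with
  | refl => exact .refl
  | tail _ hbc ih => exact Relation.ReflTransGen.head hbc.symm ih

lemma CRel.trans' {r c u v w : T} (h : CRel r c u v) (h2 : CRel r c v w) : CRel r c u w :=
  Relation.ReflTransGen.trans h h2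

lemma crel_iff_reach {r c u v : T} :
    ((coverGraph T) \ SimpleGraph.fromEdgeSet {s(r, c)}).Reachable u v ↔ CRel r c u v := by
  rw [SimpleGraph.reachable_iff_reflTransGen]
  constructor
  · refine Relation.ReflTransGen.mono ?_ u v
    intro a b hab
    rw [SimpleGraph.sdiff_adj, SimpleGraph.fromEdgeSet_adj] at hab
    exact ⟨hab.1, fun he => hab.2 ⟨by simpa using he, hab.1.ne⟩⟩
  · refine Relation.ReflTransGen.mono ?_ u v
    intro a b hab
    rw [SimpleGraph.sdiff_adj, SimpleGraph.fromEdgeSet_adj]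
    exact ⟨hab.1, fun hc => hab.2 (by simpa using hc.1)⟩

lemma crel_cover {r c : T} : ∀ u v : T, Relation.ReflTransGen (coverGraph T).Adj u v →
    CRel r c u v ∨ (CRel r c u r ∧ CRel r c c v) ∨ (CRel r c u c ∧ CRel r c r v) := by
  intro u v h
  induction h with
  | refl => exact Or.inl .refl
  | @tail b w hub hbw ih =>
    by_cases he : s(b, w) = s(r, c)
    · rcases Sym2.eq_iff.mp he with ⟨rfl, rfl⟩ | ⟨rfl, rfl⟩
      · rcases ih with h1 | ⟨h1, _⟩ | ⟨h1, _⟩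
        · exact Or.inr (Or.inl ⟨h1, .refl⟩)
        · exact Or.inr (Or.inl ⟨h1, .refl⟩)
        · exact Or.inl h1
      · rcases ih with h1 | ⟨h1, _⟩ | ⟨h1, _⟩
        · exact Or.inr (Or.inr ⟨h1, .refl⟩)
        · exact Or.inl h1
        · exact Or.inr (Or.inr ⟨h1, .refl⟩)
    · have hstep : CStep r c b w := ⟨hbw, he⟩
      rcases ih with h1 | ⟨h1, h2⟩ | ⟨h1, h2⟩
      · exact Or.inl (h1.tail hstep)
      · exact Or.inr (Or.inl ⟨h1, h2.tail hstep⟩)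
      · exact Or.inr (Or.inr ⟨h1, h2.tail hstep⟩)

lemma rtg_cov_split {r c lo hi : T} (hlh : lo ⋖ hi) (he : s(lo, hi) = s(r, c)) :
    ∀ u v : T, Relation.ReflTransGen (· ⋖ ·) u v → CRel r c u v ∨ (u ≤ lo ∧ hi ≤ v) := by
  intro u v h
  induction h using Relation.ReflTransGen.head_induction_on with
  | refl => exact Or.inl .refl
  | @head u w huw hwv ih =>
    by_cases he2 : s(u, w) = s(r, c)
    · have : s(u, w) = s(lo, hi) := he2.trans he.symm
      rcases Sym2.eq_iff.mp this with ⟨rfl, rfl⟩ | ⟨rfl, rfl⟩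
      · exact Or.inr ⟨le_refl _, rtg_cov_le hwv⟩
      · exact absurd (huw.lt.trans hlh.lt) (lt_irrefl _)
    · have hstep : CStep r c u w := ⟨Or.inl huw, he2⟩
      rcases ih with h1 | ⟨h1, h2⟩
      · exact Or.inl (Relation.ReflTransGen.head hstep h1)
      · exact Or.inr ⟨huw.le.trans h1, h2⟩

lemma cov_subtype {S : Set T} (hcl : ∀ ⦃p q w : T⦄, p ∈ S → q ∈ S → p ≤ w → w ≤ q → w ∈ S)
    (u v : ↥S) : u ⋖ v ↔ (u : T) ⋖ (v : T) := by
  constructor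
  · rintro ⟨hlt, hmax⟩
    refine ⟨Subtype.coe_lt_coe.mpr hlt, fun w hw1 hw2 => ?_⟩
    have hwS : w ∈ S := hcl u.2 v.2 hw1.le hw2.le
    exact hmax (c := ⟨w, hwS⟩) (Subtype.coe_lt_coe.mp hw1) (Subtype.coe_lt_coe.mp hw2)
  · rintro ⟨hlt, hmax⟩
    exact ⟨Subtype.coe_lt_coe.mp hlt, fun w hw1 hw2 =>
      hmax (Subtype.coe_lt_coe.mpr hw1) (Subtype.coe_lt_coe.mpr hw2)⟩

lemma isTree_subtype (htree : (coverGraph T).IsTree) (r c s0 : T)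
    (hcl : ∀ ⦃p q w : T⦄, CRel r c s0 p → CRel r c s0 q → p ≤ w → w ≤ q → CRel r c s0 w) :
    (coverGraph ↥{u | CRel r c s0 u}).IsTree := by
  set S : Set T := {u | CRel r c s0 u} with hS
  have hadj_of : ∀ u v : ↥S, (coverGraph (↥S)).Adj u v → (coverGraph T).Adj u.1 v.1 := by
    rintro u v (h | h)
    · exact Or.inl ((cov_subtype hcl u v).mp h)
    · exact Or.inr ((cov_subtype hcl v u).mp h)
  constructor
  · -- connected
    have hreach : ∀ (u : T) (hu : u ∈ S),
        Relation.ReflTransGen (coverGraph (↥S)).Adj ⟨s0, Relation.ReflTransGen.refl⟩ ⟨u, hu⟩ := by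
      intro u hu
      induction hu with
      | refl => exact .refl
      | @tail b v hsb hbv ih =>
        have hbS : b ∈ S := hsb
        have hvS : v ∈ S := hsb.tail hbv
        have hadj : (coverGraph (↥S)).Adj ⟨b, hbS⟩ ⟨v, hvS⟩ := by
          rcases hbv.1 with h | h
          · exact Or.inl ((cov_subtype hcl _ _).mpr h)
          · exact Or.inr ((cov_subtype hcl _ _).mpr h)
        exact ih.tail hadj
    rw [SimpleGraph.connected_iff_exists_forall_reachable]
    refine ⟨⟨s0, Relation.ReflTransGen.refl⟩, fun w => ?_⟩
    exact (SimpleGraph.reachable_iff_reflTransGen _ _).mpr (hreach w w.2)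
  · -- acyclic
    intro v w hw
    exact htree.IsAcyclic
      (w.map ⟨Subtype.val, fun {a b} h => hadj_of a b h⟩)
      ((SimpleGraph.Walk.map_isCycle_iff_of_injective
        (fun a b hh => Subtype.val_injective hh)).mpr hw)

end Aux

/-- A realizer triple for a finite poset with a marked root `r`:
three monotone injections into `ℕ` whose "intersection" recovers the order,
with the down-set of `r` initial in the first and the up-set of `r` final in
the second. -/
structure GoodTriple {T : Type*} [PartialOrder T] (r : T) (f g h : T → ℕ) : Prop where
  injf : Function.Injective f
  injg : Function.Injective g
  injh : Function.Injective h
  monof : ∀ ⦃u v : T⦄, u ≤ v → f u ≤ f v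
  monog : ∀ ⦃u v : T⦄, u ≤ v → g u ≤ g v
  monoh : ∀ ⦃u v : T⦄, u ≤ v → h u ≤ h v
  real : ∀ u v : T, f u ≤ f v → g u ≤ g v → h u ≤ h v → u ≤ v
  dini : ∀ ⦃u v : T⦄, u ≤ r → ¬ v ≤ r → f u < f v
  ufin : ∀ ⦃u v : T⦄, ¬ r ≤ u → r ≤ v → g u < g v

section Combine

open Classical

lemma down_combine {T : Type u} [PartialOrder T] [Fintype T]
    (htree : (coverGraph T).IsTree) (r c : T) (hcr : c ⋖ r)
    (oracle : ∀ (S : Type u) [PartialOrder S] [Fintype S],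
      Fintype.card S < Fintype.card T → (coverGraph S).IsTree →
      ∀ root : S, ∃ f g h : S → ℕ, GoodTriple root f g h) :
    ∃ f g h : T → ℕ, GoodTriple r f g h := by
  classical
  have hadj : (coverGraph T).Adj r c := Or.inr hcr
  set S1 : Set T := {u | CRel r c c u} with hS1def
  set S0 : Set T := {u | CRel r c r u} with hS0def
  -- the edge r-c is a bridge
  have hbridge : ¬ CRel r c r c := by
    have hb := (SimpleGraph.isAcyclic_iff_forall_adj_isBridge.mp htree.IsAcyclic) hadj
    rw [SimpleGraph.isBridge_iff] at hb
    exact fun hcrel => hb (crel_iff_reach.mpr hcrel)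
  have hdisj : ∀ u, u ∈ S0 → u ∈ S1 → False :=
    fun u h0 h1 => hbridge (h0.trans' h1.symm)
  have hall : ∀ u : T, u ∈ S0 ∨ u ∈ S1 := by
    intro u
    have hreach : Relation.ReflTransGen (coverGraph T).Adj r u :=
      (SimpleGraph.reachable_iff_reflTransGen _ _).mp (htree.isConnected r u)
    rcases crel_cover (r := r) (c := c) r u hreach with h1 | ⟨_, h2⟩ | ⟨h1, _⟩
    · exact Or.inl h1
    · exact Or.inr h2
    · exact absurd h1 hbridge
  have hsplit : ∀ u v : T, u ≤ v → CRel r c u v ∨ (u ≤ c ∧ r ≤ v) := by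
    intro u v huv
    exact rtg_cov_split hcr ((Sym2.eq_swap ..)) u v (le_rtg_cov u v huv)
  have hrS0 : r ∈ S0 := Relation.ReflTransGen.refl
  have hcS1 : c ∈ S1 := Relation.ReflTransGen.refl
  have noup : ∀ u ∈ S1, ¬ r ≤ u := by
    intro u hu hru
    rcases hsplit r u hru with h1 | ⟨hrc2, _⟩
    · exact hdisj u h1 hu
    · exact absurd (lt_of_le_of_lt hrc2 hcr.lt) (lt_irrefl _)
  have cross10 : ∀ {v u : T}, v ∈ S0 → u ∈ S1 → ¬ v ≤ u := by
    intro v u hv hu hvu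
    rcases hsplit v u hvu with h1 | ⟨_, hru⟩
    · exact hdisj u (hv.trans' h1) hu
    · exact noup u hu hru
  have crossle : ∀ {u v : T}, u ∈ S1 → v ∈ S0 → (u ≤ v ↔ u ≤ c ∧ r ≤ v) := by
    intro u v hu hv
    constructor
    · intro huv
      rcases hsplit u v huv with h1 | h2
      · exact absurd (hu.trans' h1) (fun hx => hdisj v hv hx)
      · exact h2
    · rintro ⟨h1, h2⟩
      exact h1.trans (hcr.le.trans h2)
  have hleC : ∀ {u : T}, u ∈ S1 → (u ≤ r ↔ u ≤ c) := by
    intro u hu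
    rw [crossle hu hrS0]
    simp
  -- interval closure of the two sides
  have hcl1 : ∀ ⦃p q w : T⦄, p ∈ S1 → q ∈ S1 → p ≤ w → w ≤ q → w ∈ S1 := by
    intro p q w hp hq hpw hwq
    rcases hall w with h0 | h1
    · exfalso
      have : r ≤ w := ((crossle hp h0).mp hpw).2
      exact noup q hq (this.trans hwq)
    · exact h1
  have hcl0 : ∀ ⦃p q w : T⦄, p ∈ S0 → q ∈ S0 → p ≤ w → w ≤ q → w ∈ S0 := by
    intro p q w hp hq hpw hwq
    rcases hall w with h0 | h1
    · exact h0
    · exact absurd hpw (cross10 hp h1)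
  -- the two sides are trees
  have htree1 : (coverGraph (↥S1)).IsTree := isTree_subtype htree r c c hcl1
  have htree0 : (coverGraph (↥S0)).IsTree := isTree_subtype htree r c r hcl0
  have hrnot1 : r ∉ S1 := fun h => hdisj r hrS0 h
  have hcnot0 : c ∉ S0 := fun h => hdisj c h hcS1
  have hcard1 : Fintype.card (↥S1) < Fintype.card T :=
    Fintype.card_lt_of_injective_of_notMem (Subtype.val) Subtype.val_injective
      (b := r) (fun ⟨p, hh⟩ => hrnot1 (hh ▸ p.2))
  have hcard0 : Fintype.card (↥S0) < Fintype.card T :=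
    Fintype.card_lt_of_injective_of_notMem (Subtype.val) Subtype.val_injective
      (b := c) (fun ⟨p, hh⟩ => hcnot0 (hh ▸ p.2))
  obtain ⟨f1, g1, h1, pk1⟩ := oracle (↥S1) hcard1 htree1 ⟨c, hcS1⟩
  obtain ⟨f0, g0, h0, pk0⟩ := oracle (↥S0) hcard0 htree0 ⟨r, hrS0⟩
  set K : ℕ := 1 + Finset.univ.sup (fun p : ↥S1 => max (f1 p) (max (g1 p) (h1 p))) with hKdef
  set K0 : ℕ := 1 + Finset.univ.sup (fun p : ↥S0 => max (f0 p) (max (g0 p) (h0 p))) with hK0def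
  have hbnd1 : ∀ p : ↥S1, f1 p < K ∧ g1 p < K ∧ h1 p < K := by
    intro p
    have h2 := Finset.le_sup (f := fun q : ↥S1 => max (f1 q) (max (g1 q) (h1 q)))
      (Finset.mem_univ p)
    have h3 : max (f1 p) (max (g1 p) (h1 p)) ≤
        Finset.univ.sup (fun q : ↥S1 => max (f1 q) (max (g1 q) (h1 q))) := h2
    omega
  have hbnd0 : ∀ p : ↥S0, f0 p < K0 ∧ g0 p < K0 ∧ h0 p < K0 := by
    intro p
    have h2 := Finset.le_sup (f := fun q : ↥S0 => max (f0 q) (max (g0 q) (h0 q)))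
      (Finset.mem_univ p)
    have h3 : max (f0 p) (max (g0 p) (h0 p)) ≤
        Finset.univ.sup (fun q : ↥S0 => max (f0 q) (max (g0 q) (h0 q))) := h2
    omega
  have mem0 : ∀ {u : T}, u ∉ S1 → u ∈ S0 := fun hu => (hall _).resolve_right hu

  have inj1f : ∀ (u v : T) (hu : u ∈ S1) (hv : v ∈ S1), f1 ⟨u, hu⟩ = f1 ⟨v, hv⟩ → u = v :=
    fun u v hu hv he => congrArg Subtype.val (pk1.injf he)
  have inj1g : ∀ (u v : T) (hu : u ∈ S1) (hv : v ∈ S1), g1 ⟨u, hu⟩ = g1 ⟨v, hv⟩ → u = v :=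
    fun u v hu hv he => congrArg Subtype.val (pk1.injg he)
  have inj1h : ∀ (u v : T) (hu : u ∈ S1) (hv : v ∈ S1), h1 ⟨u, hu⟩ = h1 ⟨v, hv⟩ → u = v :=
    fun u v hu hv he => congrArg Subtype.val (pk1.injh he)
  have inj0f : ∀ (u v : T) (hu : u ∈ S0) (hv : v ∈ S0), f0 ⟨u, hu⟩ = f0 ⟨v, hv⟩ → u = v :=
    fun u v hu hv he => congrArg Subtype.val (pk0.injf he)
  have inj0g : ∀ (u v : T) (hu : u ∈ S0) (hv : v ∈ S0), g0 ⟨u, hu⟩ = g0 ⟨v, hv⟩ → u = v :=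
    fun u v hu hv he => congrArg Subtype.val (pk0.injg he)
  have inj0h : ∀ (u v : T) (hu : u ∈ S0) (hv : v ∈ S0), h0 ⟨u, hu⟩ = h0 ⟨v, hv⟩ → u = v :=
    fun u v hu hv he => congrArg Subtype.val (pk0.injh he)
  have mono1f : ∀ {u v : T} (hu : u ∈ S1) (hv : v ∈ S1), u ≤ v → f1 ⟨u, hu⟩ ≤ f1 ⟨v, hv⟩ :=
    fun hu hv he => pk1.monof (Subtype.mk_le_mk.mpr he)
  have mono1g : ∀ {u v : T} (hu : u ∈ S1) (hv : v ∈ S1), u ≤ v → g1 ⟨u, hu⟩ ≤ g1 ⟨v, hv⟩ :=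
    fun hu hv he => pk1.monog (Subtype.mk_le_mk.mpr he)
  have mono1h : ∀ {u v : T} (hu : u ∈ S1) (hv : v ∈ S1), u ≤ v → h1 ⟨u, hu⟩ ≤ h1 ⟨v, hv⟩ :=
    fun hu hv he => pk1.monoh (Subtype.mk_le_mk.mpr he)
  have mono0f : ∀ {u v : T} (hu : u ∈ S0) (hv : v ∈ S0), u ≤ v → f0 ⟨u, hu⟩ ≤ f0 ⟨v, hv⟩ :=
    fun hu hv he => pk0.monof (Subtype.mk_le_mk.mpr he)
  have mono0g : ∀ {u v : T} (hu : u ∈ S0) (hv : v ∈ S0), u ≤ v → g0 ⟨u, hu⟩ ≤ g0 ⟨v, hv⟩ :=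
    fun hu hv he => pk0.monog (Subtype.mk_le_mk.mpr he)
  have mono0h : ∀ {u v : T} (hu : u ∈ S0) (hv : v ∈ S0), u ≤ v → h0 ⟨u, hu⟩ ≤ h0 ⟨v, hv⟩ :=
    fun hu hv he => pk0.monoh (Subtype.mk_le_mk.mpr he)
  have dini1 : ∀ (u v : T) (hu : u ∈ S1) (hv : v ∈ S1), u ≤ c → ¬ v ≤ c →
      f1 ⟨u, hu⟩ < f1 ⟨v, hv⟩ :=
    fun u v hu hv h1' h2' => pk1.dini (Subtype.mk_le_mk.mpr h1')
      (fun hx => h2' (Subtype.mk_le_mk.mp hx))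
  have dini0 : ∀ (u v : T) (hu : u ∈ S0) (hv : v ∈ S0), u ≤ r → ¬ v ≤ r →
      f0 ⟨u, hu⟩ < f0 ⟨v, hv⟩ :=
    fun u v hu hv h1' h2' => pk0.dini (Subtype.mk_le_mk.mpr h1')
      (fun hx => h2' (Subtype.mk_le_mk.mp hx))
  have ufin0 : ∀ (u v : T) (hu : u ∈ S0) (hv : v ∈ S0), ¬ r ≤ u → r ≤ v →
      g0 ⟨u, hu⟩ < g0 ⟨v, hv⟩ :=
    fun u v hu hv h1' h2' => pk0.ufin (fun hx => h1' (Subtype.mk_le_mk.mp hx))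
      (Subtype.mk_le_mk.mpr h2')
  have real1 : ∀ (u v : T) (hu : u ∈ S1) (hv : v ∈ S1), f1 ⟨u, hu⟩ ≤ f1 ⟨v, hv⟩ →
      g1 ⟨u, hu⟩ ≤ g1 ⟨v, hv⟩ → h1 ⟨u, hu⟩ ≤ h1 ⟨v, hv⟩ → u ≤ v :=
    fun u v hu hv a1 a2 a3 => Subtype.mk_le_mk.mp (pk1.real _ _ a1 a2 a3)
  have real0 : ∀ (u v : T) (hu : u ∈ S0) (hv : v ∈ S0), f0 ⟨u, hu⟩ ≤ f0 ⟨v, hv⟩ →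
      g0 ⟨u, hu⟩ ≤ g0 ⟨v, hv⟩ → h0 ⟨u, hu⟩ ≤ h0 ⟨v, hv⟩ → u ≤ v :=
    fun u v hu hv a1 a2 a3 => Subtype.mk_le_mk.mp (pk0.real _ _ a1 a2 a3)
  refine ⟨fun u => if hu : u ∈ S1 then
      (if u ≤ c then f1 ⟨u, hu⟩ else K + K0 + f1 ⟨u, hu⟩) else K + f0 ⟨u, mem0 hu⟩,
    fun u => if hu : u ∈ S1 then K0 + g1 ⟨u, hu⟩ else
      (if r ≤ u then K0 + K + g0 ⟨u, mem0 hu⟩ else g0 ⟨u, mem0 hu⟩),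
    fun u => if hu : u ∈ S1 then h1 ⟨u, hu⟩ else K + h0 ⟨u, mem0 hu⟩, ?_, ?_, ?_, ?_, ?_, ?_, ?_, ?_, ?_⟩
  · -- injf
    intro u v huv
    try dsimp only at huv
    by_cases hu : u ∈ S1 <;> by_cases hv : v ∈ S1
    · rw [dif_pos hu, dif_pos hv] at huv
      obtain ⟨b1, -, -⟩ := hbnd1 ⟨u, hu⟩
      obtain ⟨b2, -, -⟩ := hbnd1 ⟨v, hv⟩
      by_cases hcu : u ≤ c <;> by_cases hcv : v ≤ c
      · rw [if_pos hcu, if_pos hcv] at huv; exact inj1f u v hu hv huv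
      · rw [if_pos hcu, if_neg hcv] at huv; omega
      · rw [if_neg hcu, if_pos hcv] at huv; omega
      · rw [if_neg hcu, if_neg hcv] at huv; exact inj1f u v hu hv (by omega)
    · rw [dif_pos hu, dif_neg hv] at huv
      obtain ⟨b1, -, -⟩ := hbnd1 ⟨u, hu⟩
      obtain ⟨b2, -, -⟩ := hbnd0 ⟨v, mem0 hv⟩
      by_cases hcu : u ≤ c
      · rw [if_pos hcu] at huv; omega
      · rw [if_neg hcu] at huv; omega
    · rw [dif_neg hu, dif_pos hv] at huv
      obtain ⟨b1, -, -⟩ := hbnd1 ⟨v, hv⟩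
      obtain ⟨b2, -, -⟩ := hbnd0 ⟨u, mem0 hu⟩
      by_cases hcv : v ≤ c
      · rw [if_pos hcv] at huv; omega
      · rw [if_neg hcv] at huv; omega
    · rw [dif_neg hu, dif_neg hv] at huv
      exact inj0f u v (mem0 hu) (mem0 hv) (by omega)
  · -- injg
    intro u v huv
    try dsimp only at huv
    by_cases hu : u ∈ S1 <;> by_cases hv : v ∈ S1
    · rw [dif_pos hu, dif_pos hv] at huv; exact inj1g u v hu hv (by omega)
    · rw [dif_pos hu, dif_neg hv] at huv
      obtain ⟨-, b1, -⟩ := hbnd1 ⟨u, hu⟩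
      obtain ⟨-, b2, -⟩ := hbnd0 ⟨v, mem0 hv⟩
      by_cases hrv : r ≤ v
      · rw [if_pos hrv] at huv; omega
      · rw [if_neg hrv] at huv; omega
    · rw [dif_neg hu, dif_pos hv] at huv
      obtain ⟨-, b1, -⟩ := hbnd1 ⟨v, hv⟩
      obtain ⟨-, b2, -⟩ := hbnd0 ⟨u, mem0 hu⟩
      by_cases hru : r ≤ u
      · rw [if_pos hru] at huv; omega
      · rw [if_neg hru] at huv; omega
    · rw [dif_neg hu, dif_neg hv] at huv
      obtain ⟨-, b1, -⟩ := hbnd0 ⟨u, mem0 hu⟩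
      obtain ⟨-, b2, -⟩ := hbnd0 ⟨v, mem0 hv⟩
      by_cases hru : r ≤ u <;> by_cases hrv : r ≤ v
      · rw [if_pos hru, if_pos hrv] at huv; exact inj0g u v _ _ (by omega)
      · rw [if_pos hru, if_neg hrv] at huv; omega
      · rw [if_neg hru, if_pos hrv] at huv; omega
      · rw [if_neg hru, if_neg hrv] at huv; exact inj0g u v _ _ huv
  · -- injh
    intro u v huv
    try dsimp only at huv
    by_cases hu : u ∈ S1 <;> by_cases hv : v ∈ S1
    · rw [dif_pos hu, dif_pos hv] at huv; exact inj1h u v hu hv huv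
    · rw [dif_pos hu, dif_neg hv] at huv
      obtain ⟨-, -, b1⟩ := hbnd1 ⟨u, hu⟩; omega
    · rw [dif_neg hu, dif_pos hv] at huv
      obtain ⟨-, -, b1⟩ := hbnd1 ⟨v, hv⟩; omega
    · rw [dif_neg hu, dif_neg hv] at huv
      exact inj0h u v _ _ (by omega)
  · -- monof
    intro u v huv
    try dsimp only
    by_cases hu : u ∈ S1 <;> by_cases hv : v ∈ S1
    · rw [dif_pos hu, dif_pos hv]
      obtain ⟨b1, -, -⟩ := hbnd1 ⟨u, hu⟩
      by_cases hcu : u ≤ c <;> by_cases hcv : v ≤ c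
      · rw [if_pos hcu, if_pos hcv]; exact mono1f hu hv huv
      · rw [if_pos hcu, if_neg hcv]; omega
      · exact absurd (huv.trans hcv) hcu
      · rw [if_neg hcu, if_neg hcv]; have := mono1f hu hv huv; omega
    · have hcross := (crossle hu (mem0 hv)).mp huv
      rw [dif_pos hu, dif_neg hv, if_pos hcross.1]
      obtain ⟨b1, -, -⟩ := hbnd1 ⟨u, hu⟩; omega
    · exact absurd huv (cross10 (mem0 hu) hv)
    · rw [dif_neg hu, dif_neg hv]
      have := mono0f (mem0 hu) (mem0 hv) huv; omega
  · -- monog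
    intro u v huv
    try dsimp only
    by_cases hu : u ∈ S1 <;> by_cases hv : v ∈ S1
    · rw [dif_pos hu, dif_pos hv]; have := mono1g hu hv huv; omega
    · have hcross := (crossle hu (mem0 hv)).mp huv
      rw [dif_pos hu, dif_neg hv, if_pos hcross.2]
      obtain ⟨-, b1, -⟩ := hbnd1 ⟨u, hu⟩; omega
    · exact absurd huv (cross10 (mem0 hu) hv)
    · rw [dif_neg hu, dif_neg hv]
      obtain ⟨-, b1, -⟩ := hbnd0 ⟨u, mem0 hu⟩
      by_cases hru : r ≤ u
      · rw [if_pos hru, if_pos (hru.trans huv)]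
        have := mono0g (mem0 hu) (mem0 hv) huv; omega
      · by_cases hrv : r ≤ v
        · rw [if_neg hru, if_pos hrv]; omega
        · rw [if_neg hru, if_neg hrv]; exact mono0g (mem0 hu) (mem0 hv) huv
  · -- monoh
    intro u v huv
    try dsimp only
    by_cases hu : u ∈ S1 <;> by_cases hv : v ∈ S1
    · rw [dif_pos hu, dif_pos hv]; exact mono1h hu hv huv
    · rw [dif_pos hu, dif_neg hv]
      obtain ⟨-, -, b1⟩ := hbnd1 ⟨u, hu⟩; omega
    · exact absurd huv (cross10 (mem0 hu) hv)
    · rw [dif_neg hu, dif_neg hv]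
      have := mono0h (mem0 hu) (mem0 hv) huv; omega
  · -- real
    intro u v hf hg hh
    try dsimp only at hf hg hh
    by_cases hu : u ∈ S1 <;> by_cases hv : v ∈ S1
    · rw [dif_pos hu, dif_pos hv] at hf hg hh
      have hgg : g1 ⟨u, hu⟩ ≤ g1 ⟨v, hv⟩ := by omega
      have hff : f1 ⟨u, hu⟩ ≤ f1 ⟨v, hv⟩ := by
        obtain ⟨b1, -, -⟩ := hbnd1 ⟨u, hu⟩
        obtain ⟨b2, -, -⟩ := hbnd1 ⟨v, hv⟩
        by_cases hcu : u ≤ c <;> by_cases hcv : v ≤ c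
        · rwa [if_pos hcu, if_pos hcv] at hf
        · exact le_of_lt (dini1 u v hu hv hcu hcv)
        · rw [if_neg hcu, if_pos hcv] at hf; omega
        · rw [if_neg hcu, if_neg hcv] at hf; omega
      exact real1 u v hu hv hff hgg hh
    · have hv0 := mem0 hv
      rw [dif_pos hu, dif_neg hv] at hf hg
      obtain ⟨b1, b2, -⟩ := hbnd1 ⟨u, hu⟩
      obtain ⟨b3, b4, -⟩ := hbnd0 ⟨v, mem0 hv⟩
      have huc : u ≤ c := by
        by_contra hcu
        rw [if_neg hcu] at hf; omega
      have hrv : r ≤ v := by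
        by_contra hrv
        rw [if_neg hrv] at hg; omega
      exact (crossle hu hv0).mpr ⟨huc, hrv⟩
    · exfalso
      rw [dif_neg hu, dif_pos hv] at hh
      obtain ⟨-, -, b1⟩ := hbnd1 ⟨v, hv⟩; omega
    · rw [dif_neg hu, dif_neg hv] at hf hg hh
      have hgg : g0 ⟨u, mem0 hu⟩ ≤ g0 ⟨v, mem0 hv⟩ := by
        obtain ⟨-, b1, -⟩ := hbnd0 ⟨u, mem0 hu⟩
        obtain ⟨-, b2, -⟩ := hbnd0 ⟨v, mem0 hv⟩
        by_cases hru : r ≤ u <;> by_cases hrv : r ≤ v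
        · rw [if_pos hru, if_pos hrv] at hg; omega
        · rw [if_pos hru, if_neg hrv] at hg; omega
        · exact le_of_lt (ufin0 u v (mem0 hu) (mem0 hv) hru hrv)
        · rw [if_neg hru, if_neg hrv] at hg; omega
      exact real0 u v (mem0 hu) (mem0 hv) (by omega) hgg (by omega)
  · -- dini
    intro u v hur hvr
    try dsimp only
    by_cases hu : u ∈ S1
    · have hcu : u ≤ c := (hleC hu).mp hur
      rw [dif_pos hu, if_pos hcu]
      obtain ⟨b1, -, -⟩ := hbnd1 ⟨u, hu⟩
      by_cases hv : v ∈ S1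
      · have hcv : ¬ v ≤ c := fun hx => hvr ((hleC hv).mpr hx)
        rw [dif_pos hv, if_neg hcv]; omega
      · rw [dif_neg hv]; omega
    · have hu0 := mem0 hu
      rw [dif_neg hu]
      obtain ⟨b1, -, -⟩ := hbnd0 ⟨u, mem0 hu⟩
      by_cases hv : v ∈ S1
      · have hcv : ¬ v ≤ c := fun hx => hvr (hx.trans hcr.le)
        rw [dif_pos hv, if_neg hcv]; omega
      · rw [dif_neg hv]
        have := dini0 u v (mem0 hu) (mem0 hv) hur hvr; omega
  · -- ufin
    intro u v hru hrv
    try dsimp only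
    have hvnot1 : v ∉ S1 := fun h => noup v h hrv
    rw [dif_neg hvnot1, if_pos hrv]
    obtain ⟨-, b2, -⟩ := hbnd0 ⟨v, mem0 hvnot1⟩
    by_cases hu : u ∈ S1
    · rw [dif_pos hu]
      obtain ⟨-, b1, -⟩ := hbnd1 ⟨u, hu⟩; omega
    · rw [dif_neg hu, if_neg hru]
      obtain ⟨-, b1, -⟩ := hbnd0 ⟨u, mem0 hu⟩; omega

lemma coverGraph_dual {T : Type u} [PartialOrder T] :
    coverGraph (OrderDual T) = coverGraph T := by
  ext u v
  constructor
  · rintro (h | h)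
    · exact Or.inr (ofDual_covBy_ofDual_iff.mpr h)
    · exact Or.inl (ofDual_covBy_ofDual_iff.mpr h)
  · rintro (h | h)
    · exact Or.inr (ofDual_covBy_ofDual_iff.mp h)
    · exact Or.inl (ofDual_covBy_ofDual_iff.mp h)

lemma dual_triple {T : Type u} [PartialOrder T] [Fintype T] {r : T} {f g h : OrderDual T → ℕ}
    (pk : GoodTriple (OrderDual.toDual r) f g h) : ∃ f' g' h' : T → ℕ, GoodTriple r f' g' h' := by
  classical
  set N : ℕ := 1 + Finset.univ.sup (fun p : OrderDual T => max (f p) (max (g p) (h p))) with hN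
  have hbnd : ∀ p : OrderDual T, f p < N ∧ g p < N ∧ h p < N := by
    intro p
    have h2 := Finset.le_sup (f := fun q : OrderDual T => max (f q) (max (g q) (h q)))
      (Finset.mem_univ p)
    have h3 : max (f p) (max (g p) (h p)) ≤
        Finset.univ.sup (fun q : OrderDual T => max (f q) (max (g q) (h q))) := h2
    omega
  refine ⟨fun u => N - g (OrderDual.toDual u), fun u => N - f (OrderDual.toDual u),
    fun u => N - h (OrderDual.toDual u), ?_, ?_, ?_, ?_, ?_, ?_, ?_, ?_, ?_⟩
  · intro u v huv
    try dsimp only at huv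
    obtain ⟨-, b1, -⟩ := hbnd (OrderDual.toDual u)
    obtain ⟨-, b2, -⟩ := hbnd (OrderDual.toDual v)
    have : g (OrderDual.toDual u) = g (OrderDual.toDual v) := by omega
    exact OrderDual.toDual.injective (pk.injg this)
  · intro u v huv
    try dsimp only at huv
    obtain ⟨b1, -, -⟩ := hbnd (OrderDual.toDual u)
    obtain ⟨b2, -, -⟩ := hbnd (OrderDual.toDual v)
    have : f (OrderDual.toDual u) = f (OrderDual.toDual v) := by omega
    exact OrderDual.toDual.injective (pk.injf this)
  · intro u v huv
    try dsimp only at huv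
    obtain ⟨-, -, b1⟩ := hbnd (OrderDual.toDual u)
    obtain ⟨-, -, b2⟩ := hbnd (OrderDual.toDual v)
    have : h (OrderDual.toDual u) = h (OrderDual.toDual v) := by omega
    exact OrderDual.toDual.injective (pk.injh this)
  · intro u v huv
    have := pk.monog (OrderDual.toDual_le_toDual.mpr huv)
    try dsimp only
    omega
  · intro u v huv
    have := pk.monof (OrderDual.toDual_le_toDual.mpr huv)
    try dsimp only
    omega
  · intro u v huv
    have := pk.monoh (OrderDual.toDual_le_toDual.mpr huv)
    try dsimp only
    omega
  · intro u v hf hg hh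
    try dsimp only at hf hg hh
    obtain ⟨b1, b2, b3⟩ := hbnd (OrderDual.toDual u)
    obtain ⟨b4, b5, b6⟩ := hbnd (OrderDual.toDual v)
    have h1 : f (OrderDual.toDual v) ≤ f (OrderDual.toDual u) := by omega
    have h2 : g (OrderDual.toDual v) ≤ g (OrderDual.toDual u) := by omega
    have h3 : h (OrderDual.toDual v) ≤ h (OrderDual.toDual u) := by omega
    exact OrderDual.toDual_le_toDual.mp (pk.real _ _ h1 h2 h3)
  · intro u v h1 h2
    try dsimp only
    have := pk.ufin (u := OrderDual.toDual v) (v := OrderDual.toDual u)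
      (fun hx => h2 (OrderDual.toDual_le_toDual.mp hx)) (OrderDual.toDual_le_toDual.mpr h1)
    obtain ⟨-, b1, -⟩ := hbnd (OrderDual.toDual u)
    obtain ⟨-, b2, -⟩ := hbnd (OrderDual.toDual v)
    omega
  · intro u v h1 h2
    try dsimp only
    have := pk.dini (u := OrderDual.toDual v) (v := OrderDual.toDual u)
      (OrderDual.toDual_le_toDual.mpr h2) (fun hx => h1 (OrderDual.toDual_le_toDual.mp hx))
    obtain ⟨b1, -, -⟩ := hbnd (OrderDual.toDual u)
    obtain ⟨b2, -, -⟩ := hbnd (OrderDual.toDual v)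
    omega

lemma tree_realizer : ∀ (n : ℕ) (T : Type u) [PartialOrder T] [Fintype T],
    Fintype.card T ≤ n → (coverGraph T).IsTree →
    ∀ r : T, ∃ f g h : T → ℕ, GoodTriple r f g h := by
  intro n
  induction n using Nat.strong_induction_on with
  | _ n IH =>
    intro T _ _ hcard htree r
    by_cases hone : Fintype.card T ≤ 1
    · haveI : Subsingleton T := Fintype.card_le_one_iff_subsingleton.mp hone
      refine ⟨fun _ => 0, fun _ => 0, fun _ => 0, ?_, ?_, ?_, ?_, ?_, ?_, ?_, ?_, ?_⟩
      · intro u v _; exact Subsingleton.elim u v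
      · intro u v _; exact Subsingleton.elim u v
      · intro u v _; exact Subsingleton.elim u v
      · intro u v _; exact le_refl 0
      · intro u v _; exact le_refl 0
      · intro u v _; exact le_refl 0
      · intro u v _ _ _; exact le_of_eq (Subsingleton.elim u v)
      · intro u v h1 h2; exact absurd (Subsingleton.elim v u ▸ h1) h2
      · intro u v h1 h2; exact absurd (Subsingleton.elim u v ▸ h2) h1
    · -- at least two elements: find a neighbour of r in the cover graph
      push_neg at hone
      obtain ⟨v, hv⟩ := Fintype.exists_ne_of_one_lt_card hone r
      have hreach : Relation.ReflTransGen (coverGraph T).Adj r v :=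
        (SimpleGraph.reachable_iff_reflTransGen _ _).mp (htree.isConnected r v)
      have hex : ∃ c : T, (coverGraph T).Adj r c := by
        rcases hreach.cases_head with heq | ⟨c, hc, -⟩
        · exact absurd heq (Ne.symm hv)
        · exact ⟨c, hc⟩
      obtain ⟨c, hadj⟩ := hex
      have hcardD : Fintype.card (OrderDual T) = Fintype.card T :=
        (Fintype.card_congr (OrderDual.toDual (α := T))).symm
      rcases hadj with hrc | hcr
      · -- r ⋖ c : "up" case, dualize
        have htreeD : (coverGraph (OrderDual T)).IsTree := by
          rw [coverGraph_dual]; exact htree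
        obtain ⟨f, g, h, pk⟩ := down_combine htreeD (OrderDual.toDual r) (OrderDual.toDual c)
          hrc.toDual (fun S _ _ hlt htree' root =>
            IH (Fintype.card S) (by omega) S (le_refl _) htree' root)
        exact dual_triple pk
      · -- c ⋖ r : "down" case
        exact down_combine htree r c hcr (fun S _ _ hlt htree' root =>
          IH (Fintype.card S) (lt_of_lt_of_le hlt hcard) S (le_refl _) htree' root)


/-- grafting rooted tree posets on the minimum and maximum of the
square poset yields a poset of dimension at most `3` (the trees grafted at the
two middle vertices being trivial). -/
theorem graft_square_dim_le_three {β : Type*} [PartialOrder β] [Fintype β]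
    (x a b z : β) (hnd : [x, a, b, z].Nodup)
    (hall : ∀ w : β, w = x ∨ w = a ∨ w = b ∨ w = z)
    (hlt : ∀ u v : β, u < v ↔
      ((u = x ∧ (v = a ∨ v = b ∨ v = z)) ∨ ((u = a ∨ u = b) ∧ v = z)))
    {T : β → Type*} [∀ w, PartialOrder (T w)] [∀ w, Fintype (T w)]
    (htree : ∀ w, (coverGraph (T w)).IsTree) (r : ∀ w, T w)
    (htriv : ∀ w, w ≠ x → w ≠ z → ∀ t t' : T w, t = t') :
    ∃ L : Fin 3 → (Σ w, T w) → (Σ w, T w) → Prop,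
      (∀ i, IsLinearOrder (Σ w, T w) (L i) ∧ ∀ p q, graftLE r p q → L i p q) ∧
      (∀ p q : Σ w, T w, graftLE r p q ↔ ∀ i, L i p q) := by
  classical
  have hnd' := hnd
  simp only [List.nodup_cons, List.mem_cons, List.mem_singleton, List.not_mem_nil, or_false,
    not_or, List.nodup_nil, and_true] at hnd'
  obtain ⟨⟨hxa, hxb, hxz⟩, ⟨hab, haz⟩, hbz, -⟩ := hnd'
  have hax : a ≠ x := Ne.symm hxa
  have hbx : b ≠ x := Ne.symm hxb
  have hba : b ≠ a := Ne.symm hab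
  have hzx : z ≠ x := Ne.symm hxz
  have hza : z ≠ a := Ne.symm haz
  have hzb : z ≠ b := Ne.symm hbz
  have hlt_xa : x < a := (hlt x a).mpr (Or.inl ⟨rfl, Or.inl rfl⟩)
  have hlt_xb : x < b := (hlt x b).mpr (Or.inl ⟨rfl, Or.inr (Or.inl rfl)⟩)
  have hlt_xz : x < z := (hlt x z).mpr (Or.inl ⟨rfl, Or.inr (Or.inr rfl)⟩)
  have hlt_az : a < z := (hlt a z).mpr (Or.inr ⟨Or.inl rfl, rfl⟩)
  have hlt_bz : b < z := (hlt b z).mpr (Or.inr ⟨Or.inr rfl, rfl⟩)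
  obtain ⟨fX, gX, hX, pkX⟩ := tree_realizer (Fintype.card (T x)) (T x) (le_refl _) (htree x) (r x)
  obtain ⟨fZ, gZ, hZ, pkZ⟩ := tree_realizer (Fintype.card (T z)) (T z) (le_refl _) (htree z) (r z)
  set MX : ℕ := 1 + Finset.univ.sup (fun s : T x => max (fX s) (max (gX s) (hX s))) with hMX
  set MZ : ℕ := 1 + Finset.univ.sup (fun t : T z => max (fZ t) (max (gZ t) (hZ t))) with hMZ
  have bX : ∀ s : T x, fX s < MX ∧ gX s < MX ∧ hX s < MX := by
    intro s
    have h2 := Finset.le_sup (f := fun q : T x => max (fX q) (max (gX q) (hX q)))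
      (Finset.mem_univ s)
    have h3 : max (fX s) (max (gX s) (hX s)) ≤
        Finset.univ.sup (fun q : T x => max (fX q) (max (gX q) (hX q))) := h2
    omega
  have bZ : ∀ t : T z, fZ t < MZ ∧ gZ t < MZ ∧ hZ t < MZ := by
    intro t
    have h2 := Finset.le_sup (f := fun q : T z => max (fZ q) (max (gZ q) (hZ q)))
      (Finset.mem_univ t)
    have h3 : max (fZ t) (max (gZ t) (hZ t)) ≤
        Finset.univ.sup (fun q : T z => max (fZ q) (max (gZ q) (hZ q))) := h2
    omega
  set F1 : (Σ w, T w) → ℕ :=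
    sigRank x a b z hX MX (MX+1) (fun t => MX + 2 + fZ t) with hF1
  set F2 : (Σ w, T w) → ℕ :=
    sigRank x a b z (fun s => MZ + gX s) (MZ+MX+1) (MZ+MX)
      (fun t => if r z ≤ t then MZ+MX+2+gZ t else gZ t) with hF2
  set F3 : (Σ w, T w) → ℕ :=
    sigRank x a b z (fun s => if s ≤ r x then fX s else MX+2+MZ+fX s) MX (MX+1)
      (fun t => MX + 2 + hZ t) with hF3
  have c1x : ∀ s : T x, F1 ⟨x, s⟩ = hX s := fun s => by rw [hF1]; exact sigRank_x ..
  have c1a : ∀ t : T a, F1 ⟨a, t⟩ = MX := fun t => by rw [hF1]; exact sigRank_a _ _ _ _ _ _ _ _ hax t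
  have c1b : ∀ t : T b, F1 ⟨b, t⟩ = MX + 1 :=
    fun t => by rw [hF1]; exact sigRank_b _ _ _ _ _ _ _ _ hbx hba t
  have c1z : ∀ t : T z, F1 ⟨z, t⟩ = MX + 2 + fZ t :=
    fun t => by rw [hF1]; exact sigRank_z _ _ _ _ _ _ _ _ hzx hza hzb t
  have c2x : ∀ s : T x, F2 ⟨x, s⟩ = MZ + gX s := fun s => by rw [hF2]; exact sigRank_x ..
  have c2a : ∀ t : T a, F2 ⟨a, t⟩ = MZ+MX+1 :=
    fun t => by rw [hF2]; exact sigRank_a _ _ _ _ _ _ _ _ hax t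
  have c2b : ∀ t : T b, F2 ⟨b, t⟩ = MZ+MX :=
    fun t => by rw [hF2]; exact sigRank_b _ _ _ _ _ _ _ _ hbx hba t
  have c2z : ∀ t : T z, F2 ⟨z, t⟩ = if r z ≤ t then MZ+MX+2+gZ t else gZ t :=
    fun t => by rw [hF2]; exact sigRank_z _ _ _ _ _ _ _ _ hzx hza hzb t
  have c3x : ∀ s : T x, F3 ⟨x, s⟩ = if s ≤ r x then fX s else MX+2+MZ+fX s :=
    fun s => by rw [hF3]; exact sigRank_x ..
  have c3a : ∀ t : T a, F3 ⟨a, t⟩ = MX := fun t => by rw [hF3]; exact sigRank_a _ _ _ _ _ _ _ _ hax t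
  have c3b : ∀ t : T b, F3 ⟨b, t⟩ = MX + 1 :=
    fun t => by rw [hF3]; exact sigRank_b _ _ _ _ _ _ _ _ hbx hba t
  have c3z : ∀ t : T z, F3 ⟨z, t⟩ = MX + 2 + hZ t :=
    fun t => by rw [hF3]; exact sigRank_z _ _ _ _ _ _ _ _ hzx hza hzb t
  -- trivial fibers
  have hra : ∀ t : T a, r a ≤ t := fun t => le_of_eq (htriv a hax haz (r a) t)
  have hra' : ∀ t : T a, t ≤ r a := fun t => le_of_eq (htriv a hax haz t (r a))
  have hrb : ∀ t : T b, r b ≤ t := fun t => le_of_eq (htriv b hbx hbz (r b) t)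
  have hrb' : ∀ t : T b, t ≤ r b := fun t => le_of_eq (htriv b hbx hbz t (r b))
  have mk_same : ∀ {u : β} {s t : T u}, s ≤ t → graftLE r ⟨u, s⟩ ⟨u, t⟩ :=
    fun hst => Or.inl ⟨rfl, hst⟩
  have mk_cross : ∀ {u v : β} {s : T u} {t : T v}, u < v → s ≤ r u → r v ≤ t →
      graftLE r ⟨u, s⟩ ⟨v, t⟩ := fun huv h1 h2 => Or.inr ⟨huv, h1, h2⟩
  -- monotonicity of the three ranks
  have hmono1 : ∀ p q, graftLE r p q → F1 p ≤ F1 q := by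
    intro p q hpq
    obtain ⟨u, s⟩ := p; obtain ⟨v, t⟩ := q
    rcases hpq with ⟨heq, hle⟩ | ⟨hlt', h1, h2⟩
    · dsimp only at heq; subst heq
      have hst : s ≤ t := hle
      rcases hall u with h | h | h | h <;> subst u
      · rw [c1x, c1x]; exact pkX.monoh hst
      · rw [c1a, c1a]
      · rw [c1b, c1b]
      · rw [c1z, c1z]; have := pkZ.monof hst; omega
    · have hlt'' : u < v := hlt'
      have h1' : s ≤ r u := h1
      have h2' : r v ≤ t := h2
      rcases (hlt u v).mp hlt'' with ⟨hu2, hv2 | hv2 | hv2⟩ | ⟨hu2 | hu2, hv2⟩ <;> subst u <;> subst v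
      · rw [c1x, c1a]; have := bX s; omega
      · rw [c1x, c1b]; have := bX s; omega
      · rw [c1x, c1z]; have := bX s; omega
      · rw [c1a, c1z]; omega
      · rw [c1b, c1z]; omega
  have hmono2 : ∀ p q, graftLE r p q → F2 p ≤ F2 q := by
    intro p q hpq
    obtain ⟨u, s⟩ := p; obtain ⟨v, t⟩ := q
    rcases hpq with ⟨heq, hle⟩ | ⟨hlt', h1, h2⟩
    · dsimp only at heq; subst heq
      have hst : s ≤ t := hle
      rcases hall u with h | h | h | h <;> subst u
      · rw [c2x, c2x]; have := pkX.monog hst; omega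
      · rw [c2a, c2a]
      · rw [c2b, c2b]
      · rw [c2z, c2z]
        have := pkZ.monog hst
        have := bZ s
        by_cases hrs : r z ≤ s
        · rw [if_pos hrs, if_pos (hrs.trans hst)]; omega
        · by_cases hrt : r z ≤ t
          · rw [if_neg hrs, if_pos hrt]; omega
          · rw [if_neg hrs, if_neg hrt]; omega
    · have hlt'' : u < v := hlt'
      have h1' : s ≤ r u := h1
      have h2' : r v ≤ t := h2
      rcases (hlt u v).mp hlt'' with ⟨hu2, hv2 | hv2 | hv2⟩ | ⟨hu2 | hu2, hv2⟩ <;> subst u <;> subst v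
      · rw [c2x, c2a]; have := bX s; omega
      · rw [c2x, c2b]; have := bX s; omega
      · rw [c2x, c2z, if_pos h2']; have := bX s; omega
      · rw [c2a, c2z, if_pos h2']; omega
      · rw [c2b, c2z, if_pos h2']; omega
  have hmono3 : ∀ p q, graftLE r p q → F3 p ≤ F3 q := by
    intro p q hpq
    obtain ⟨u, s⟩ := p; obtain ⟨v, t⟩ := q
    rcases hpq with ⟨heq, hle⟩ | ⟨hlt', h1, h2⟩
    · dsimp only at heq; subst heq
      have hst : s ≤ t := hle
      rcases hall u with h | h | h | h <;> subst u
      · rw [c3x, c3x]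
        have := pkX.monof hst
        have := bX s
        by_cases hs : s ≤ r x
        · by_cases ht : t ≤ r x
          · rw [if_pos hs, if_pos ht]; omega
          · rw [if_pos hs, if_neg ht]; omega
        · have ht : ¬ t ≤ r x := fun hh => hs (hst.trans hh)
          rw [if_neg hs, if_neg ht]; omega
      · rw [c3a, c3a]
      · rw [c3b, c3b]
      · rw [c3z, c3z]; have := pkZ.monoh hst; omega
    · have hlt'' : u < v := hlt'
      have h1' : s ≤ r u := h1
      have h2' : r v ≤ t := h2
      rcases (hlt u v).mp hlt'' with ⟨hu2, hv2 | hv2 | hv2⟩ | ⟨hu2 | hu2, hv2⟩ <;> subst u <;> subst v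
      · rw [c3x, c3a, if_pos h1']; have := bX s; omega
      · rw [c3x, c3b, if_pos h1']; have := bX s; omega
      · rw [c3x, c3z, if_pos h1']; have := bX s; omega
      · rw [c3a, c3z]; omega
      · rw [c3b, c3z]; omega
  -- injectivity of the three ranks
  have hinj1 : Function.Injective F1 := by
    intro p q huv
    obtain ⟨u, s⟩ := p; obtain ⟨v, t⟩ := q
    rcases hall u with h | h | h | h <;> subst u <;> rcases hall v with h | h | h | h <;> subst v
    · rw [c1x, c1x] at huv; exact congrArg (Sigma.mk x) (pkX.injh huv)
    · exfalso; rw [c1x, c1a] at huv; have := bX s; omega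
    · exfalso; rw [c1x, c1b] at huv; have := bX s; omega
    · exfalso; rw [c1x, c1z] at huv; have := bX s; omega
    · exfalso; rw [c1a, c1x] at huv; have := bX t; omega
    · exact congrArg (Sigma.mk a) (htriv a hax haz s t)
    · exfalso; rw [c1a, c1b] at huv; omega
    · exfalso; rw [c1a, c1z] at huv; omega
    · exfalso; rw [c1b, c1x] at huv; have := bX t; omega
    · exfalso; rw [c1b, c1a] at huv; omega
    · exact congrArg (Sigma.mk b) (htriv b hbx hbz s t)
    · exfalso; rw [c1b, c1z] at huv; omega
    · exfalso; rw [c1z, c1x] at huv; have := bX t; omega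
    · exfalso; rw [c1z, c1a] at huv; omega
    · exfalso; rw [c1z, c1b] at huv; omega
    · rw [c1z, c1z] at huv; exact congrArg (Sigma.mk z) (pkZ.injf (by omega))
  have hinj2 : Function.Injective F2 := by
    intro p q huv
    obtain ⟨u, s⟩ := p; obtain ⟨v, t⟩ := q
    rcases hall u with h | h | h | h <;> subst u <;> rcases hall v with h | h | h | h <;> subst v
    · rw [c2x, c2x] at huv; exact congrArg (Sigma.mk x) (pkX.injg (by omega))
    · exfalso; rw [c2x, c2a] at huv; have := bX s; omega
    · exfalso; rw [c2x, c2b] at huv; have := bX s; omega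
    · exfalso
      rw [c2x, c2z] at huv
      have := bX s
      have := bZ t
      by_cases hrt : r z ≤ t
      · rw [if_pos hrt] at huv; omega
      · rw [if_neg hrt] at huv; omega
    · exfalso; rw [c2a, c2x] at huv; have := bX t; omega
    · exact congrArg (Sigma.mk a) (htriv a hax haz s t)
    · exfalso; rw [c2a, c2b] at huv; omega
    · exfalso
      rw [c2a, c2z] at huv
      have := bZ t
      by_cases hrt : r z ≤ t
      · rw [if_pos hrt] at huv; omega
      · rw [if_neg hrt] at huv; omega
    · exfalso; rw [c2b, c2x] at huv; have := bX t; omega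
    · exfalso; rw [c2b, c2a] at huv; omega
    · exact congrArg (Sigma.mk b) (htriv b hbx hbz s t)
    · exfalso
      rw [c2b, c2z] at huv
      have := bZ t
      by_cases hrt : r z ≤ t
      · rw [if_pos hrt] at huv; omega
      · rw [if_neg hrt] at huv; omega
    · exfalso
      rw [c2z, c2x] at huv
      have := bX t
      have := bZ s
      by_cases hrs : r z ≤ s
      · rw [if_pos hrs] at huv; omega
      · rw [if_neg hrs] at huv; omega
    · exfalso
      rw [c2z, c2a] at huv
      have := bZ s
      by_cases hrs : r z ≤ s
      · rw [if_pos hrs] at huv; omega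
      · rw [if_neg hrs] at huv; omega
    · exfalso
      rw [c2z, c2b] at huv
      have := bZ s
      by_cases hrs : r z ≤ s
      · rw [if_pos hrs] at huv; omega
      · rw [if_neg hrs] at huv; omega
    · rw [c2z, c2z] at huv
      have := bZ s
      have := bZ t
      refine congrArg (Sigma.mk z) (pkZ.injg ?_)
      by_cases hrs : r z ≤ s <;> by_cases hrt : r z ≤ t
      · rw [if_pos hrs, if_pos hrt] at huv; omega
      · rw [if_pos hrs, if_neg hrt] at huv; omega
      · rw [if_neg hrs, if_pos hrt] at huv; omega
      · rw [if_neg hrs, if_neg hrt] at huv; omega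
  have hinj3 : Function.Injective F3 := by
    intro p q huv
    obtain ⟨u, s⟩ := p; obtain ⟨v, t⟩ := q
    rcases hall u with h | h | h | h <;> subst u <;> rcases hall v with h | h | h | h <;> subst v
    · rw [c3x, c3x] at huv
      have := bX s
      have := bX t
      refine congrArg (Sigma.mk x) (pkX.injf ?_)
      by_cases hs : s ≤ r x <;> by_cases ht : t ≤ r x
      · rw [if_pos hs, if_pos ht] at huv; omega
      · rw [if_pos hs, if_neg ht] at huv; omega
      · rw [if_neg hs, if_pos ht] at huv; omega
      · rw [if_neg hs, if_neg ht] at huv; omega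
    · exfalso
      rw [c3x, c3a] at huv
      have := bX s
      by_cases hs : s ≤ r x
      · rw [if_pos hs] at huv; omega
      · rw [if_neg hs] at huv; omega
    · exfalso
      rw [c3x, c3b] at huv
      have := bX s
      by_cases hs : s ≤ r x
      · rw [if_pos hs] at huv; omega
      · rw [if_neg hs] at huv; omega
    · exfalso
      rw [c3x, c3z] at huv
      have := bX s
      have := bZ t
      by_cases hs : s ≤ r x
      · rw [if_pos hs] at huv; omega
      · rw [if_neg hs] at huv; omega
    · exfalso
      rw [c3a, c3x] at huv
      have := bX t
      by_cases ht : t ≤ r x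
      · rw [if_pos ht] at huv; omega
      · rw [if_neg ht] at huv; omega
    · exact congrArg (Sigma.mk a) (htriv a hax haz s t)
    · exfalso; rw [c3a, c3b] at huv; omega
    · exfalso; rw [c3a, c3z] at huv; omega
    · exfalso
      rw [c3b, c3x] at huv
      have := bX t
      by_cases ht : t ≤ r x
      · rw [if_pos ht] at huv; omega
      · rw [if_neg ht] at huv; omega
    · exfalso; rw [c3b, c3a] at huv; omega
    · exact congrArg (Sigma.mk b) (htriv b hbx hbz s t)
    · exfalso; rw [c3b, c3z] at huv; omega
    · exfalso
      rw [c3z, c3x] at huv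
      have := bX t
      have := bZ s
      by_cases ht : t ≤ r x
      · rw [if_pos ht] at huv; omega
      · rw [if_neg ht] at huv; omega
    · exfalso; rw [c3z, c3a] at huv; omega
    · exfalso; rw [c3z, c3b] at huv; omega
    · rw [c3z, c3z] at huv; exact congrArg (Sigma.mk z) (pkZ.injh (by omega))
  have key : ∀ F : (Σ w, T w) → ℕ, Function.Injective F →
      IsLinearOrder (Σ w, T w) (fun p q => F p ≤ F q) := by
    intro F hinj
    haveI : IsRefl (Σ w, T w) (fun p q => F p ≤ F q) := ⟨fun p => le_refl _⟩
    haveI : IsTrans (Σ w, T w) (fun p q => F p ≤ F q) := ⟨fun p q s h1 h2 => le_trans h1 h2⟩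
    haveI : IsPreorder (Σ w, T w) (fun p q => F p ≤ F q) := {}
    haveI : IsAntisymm (Σ w, T w) (fun p q => F p ≤ F q) :=
      ⟨fun p q h1 h2 => hinj (le_antisymm h1 h2)⟩
    haveI : IsPartialOrder (Σ w, T w) (fun p q => F p ≤ F q) := {}
    haveI : IsTotal (Σ w, T w) (fun p q => F p ≤ F q) := ⟨fun p q => le_total _ _⟩
    exact {}
  refine ⟨fun i => if i.1 = 0 then (fun p q => F1 p ≤ F1 q)
    else if i.1 = 1 then (fun p q => F2 p ≤ F2 q) else (fun p q => F3 p ≤ F3 q), ?_, ?_⟩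
  · intro i
    rcases i with ⟨iv, hiv⟩
    interval_cases iv
    · simp only [if_pos]
      exact ⟨key F1 hinj1, hmono1⟩
    · norm_num
      exact ⟨key F2 hinj2, hmono2⟩
    · norm_num
      exact ⟨key F3 hinj3, hmono3⟩
  · intro p q
    constructor
    · intro hpq i
      rcases i with ⟨iv, hiv⟩
      interval_cases iv
      · simp only [if_pos]; exact hmono1 p q hpq
      · norm_num; exact hmono2 p q hpq
      · norm_num; exact hmono3 p q hpq
    · intro hL
      have H1 : F1 p ≤ F1 q := by have hh := hL ⟨0, by norm_num⟩; norm_num at hh; exact hh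
      have H2 : F2 p ≤ F2 q := by have hh := hL ⟨1, by norm_num⟩; norm_num at hh; exact hh
      have H3 : F3 p ≤ F3 q := by have hh := hL ⟨2, by norm_num⟩; norm_num at hh; exact hh
      clear hL
      obtain ⟨u, s⟩ := p; obtain ⟨v, t⟩ := q
      rcases hall u with h | h | h | h <;> subst u <;> rcases hall v with h | h | h | h <;> subst v
      · -- x x
        rw [c1x, c1x] at H1
        rw [c2x, c2x] at H2
        rw [c3x, c3x] at H3
        have h2 : gX s ≤ gX t := by omega
        have h3 : fX s ≤ fX t := by
          have := bX s
          have := bX t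
          by_cases hs : s ≤ r x <;> by_cases ht : t ≤ r x
          · rwa [if_pos hs, if_pos ht] at H3
          · exact le_of_lt (pkX.dini hs ht)
          · rw [if_neg hs, if_pos ht] at H3; omega
          · rw [if_neg hs, if_neg ht] at H3; omega
        exact mk_same (pkX.real s t h3 h2 H1)
      · -- x a
        rw [c3x, c3a] at H3
        have := bX s
        have hs : s ≤ r x := by
          by_contra hs
          rw [if_neg hs] at H3; omega
        exact mk_cross hlt_xa hs (hra t)
      · -- x b
        rw [c3x, c3b] at H3
        have := bX s
        have hs : s ≤ r x := by
          by_contra hs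
          rw [if_neg hs] at H3; omega
        exact mk_cross hlt_xb hs (hrb t)
      · -- x z
        rw [c3x, c3z] at H3
        rw [c2x, c2z] at H2
        have := bX s
        have := bZ t
        have hs : s ≤ r x := by
          by_contra hs
          rw [if_neg hs] at H3; omega
        have hrt : r z ≤ t := by
          by_contra hrt
          rw [if_neg hrt] at H2; omega
        exact mk_cross hlt_xz hs hrt
      · -- a x
        exfalso; rw [c1a, c1x] at H1; have := bX t; omega
      · -- a a
        exact mk_same (le_of_eq (htriv a hax haz s t))
      · -- a b
        exfalso; rw [c2a, c2b] at H2; omega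
      · -- a z
        rw [c2a, c2z] at H2
        have := bZ t
        have hrt : r z ≤ t := by
          by_contra hrt
          rw [if_neg hrt] at H2; omega
        exact mk_cross hlt_az (hra' s) hrt
      · -- b x
        exfalso; rw [c1b, c1x] at H1; have := bX t; omega
      · -- b a
        exfalso; rw [c1b, c1a] at H1; omega
      · -- b b
        exact mk_same (le_of_eq (htriv b hbx hbz s t))
      · -- b z
        rw [c2b, c2z] at H2
        have := bZ t
        have hrt : r z ≤ t := by
          by_contra hrt
          rw [if_neg hrt] at H2; omega
        exact mk_cross hlt_bz (hrb' s) hrt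
      · -- z x
        exfalso; rw [c1z, c1x] at H1; have := bX t; omega
      · -- z a
        exfalso; rw [c1z, c1a] at H1; omega
      · -- z b
        exfalso; rw [c1z, c1b] at H1; omega
      · -- z z
        rw [c1z, c1z] at H1
        rw [c2z, c2z] at H2
        rw [c3z, c3z] at H3
        have h1 : fZ s ≤ fZ t := by omega
        have h3 : hZ s ≤ hZ t := by omega
        have h2 : gZ s ≤ gZ t := by
          have := bZ s
          have := bZ t
          by_cases hrs : r z ≤ s <;> by_cases hrt : r z ≤ t
          · rw [if_pos hrs, if_pos hrt] at H2; omega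
          · rw [if_pos hrs, if_neg hrt] at H2; omega
          · exact le_of_lt (pkZ.ufin hrs hrt)
          · rw [if_neg hrs, if_neg hrt] at H2; omega
        exact mk_same (pkZ.real s t h1 h2 h3)
end Combine
end
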